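/- arXiv:math/0611848 — 3 statements merged into one kernel-verified Lean document; each statement's English description precedes it below -/
import Mathlib

section
/- Lagrangian concordance is transitive: if K₀, K₁, K₂ are Legendrian knots in (ℝ³, dz − y dx) with K₀ ≺ K₁ and K₁ ≺ K₂, then K₀ ≺ K₂. Together with reflexivity (via trivial cylinders), ≺ is a preorder on Legendrian knots. -/
open Real Set

noncomputable section

abbrev R3 : Type := ℝ × ℝ × ℝ
abbrev R4 : Type := R3 × ℝ

/-- The symplectisation form `ω = d(e^t α)` on `ℝ³ × ℝ` (coordinates ((x,y,z),t)),
where `α = dz - y dx`, evaluated at the point `p` on tangent vectors `u`, `v`: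
`ω = e^t((u₄v₃ - u₃v₄) - y(u₄v₁ - u₁v₄) + (u₁v₂ - u₂v₁))`. -/
def omegaSym (p u v : R4) : ℝ :=
  Real.exp p.2 *
    ((u.2 * v.1.2.2 - u.1.2.2 * v.2)
      - p.1.2.1 * (u.2 * v.1.1 - u.1.1 * v.2)
      + (u.1.1 * v.1.2.1 - u.1.2.1 * v.1.1))

/-- partial derivative of a parametrized cylinder in the circle variable -/
def pd1 (C : ℝ → ℝ → R4) (s t : ℝ) : R4 := deriv (fun u => C u t) s

/-- partial derivative of a parametrized cylinder in the ℝ variable -/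
def pd2 (C : ℝ → ℝ → R4) (s t : ℝ) : R4 := deriv (fun u => C s u) t

/-- A Legendrian knot in `(ℝ³, dz - y dx)`: a smooth embedding `γ` of `ℝ/2πℤ`
(modelled by a 2π-periodic map which is injective modulo the period and is an
immersion) satisfying `z'(s) = y(s) x'(s)` for all `s`. -/
structure IsLegendrianKnot (γ : ℝ → R3) : Prop where
  smooth : ContDiff ℝ (⊤ : ℕ∞) γ
  periodic : Function.Periodic γ (2 * π)
  inj : ∀ s₁ s₂ : ℝ, γ s₁ = γ s₂ → ∃ n : ℤ, s₂ = s₁ + n * (2 * π)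
  immersed : ∀ s, deriv γ s ≠ 0
  legendrian : ∀ s,
    deriv (fun u => (γ u).2.2) s = (γ s).2.1 * deriv (fun u => (γ u).1) s

/-- The image of the parametrized cylinder `C` is Lagrangian for `ω`:
`ω` restricts to zero on all of its tangent planes (which are spanned by the two
partial derivatives of `C`). -/
def IsLagrangianCyl (C : ℝ → ℝ → R4) : Prop :=
  ∀ s t, omegaSym (C s t) (pd1 C s t) (pd2 C s t) = 0

/-- A Lagrangian concordance from `K₀` to `K₁`: a smooth proper embedding of the
cylinder `(ℝ/2πℤ) × ℝ` into `ℝ³ × ℝ` with Lagrangian image, equal to the trivial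
cylinder over `K₀` (resp. `K₁`) for `t ≤ -T` (resp. `t ≥ T`). -/
structure IsLagConcordance (K₀ K₁ : ℝ → R3) (C : ℝ → ℝ → R4) : Prop where
  smooth : ContDiff ℝ (⊤ : ℕ∞) (fun p : ℝ × ℝ => C p.1 p.2)
  periodic : ∀ s t, C (s + 2 * π) t = C s t
  inj : ∀ s₁ t₁ s₂ t₂, C s₁ t₁ = C s₂ t₂ → t₁ = t₂ ∧ ∃ n : ℤ, s₂ = s₁ + n * (2 * π)
  immersed : ∀ s t, LinearIndependent ℝ ![pd1 C s t, pd2 C s t]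
  lagrangian : IsLagrangianCyl C
  ends : ∃ T > 0, (∀ s t, t ≤ -T → C s t = (K₀ s, t)) ∧
    (∀ s t, T ≤ t → C s t = (K₁ s, t))

/-- The Lagrangian concordance relation `K₀ ≺ K₁`. -/
def Prec (K₀ K₁ : ℝ → R3) : Prop := ∃ C, IsLagConcordance K₀ K₁ C

-- Auxiliary lemmas
def shiftC (C : ℝ → ℝ → R4) (a : ℝ) : ℝ → ℝ → R4 :=
  fun s t => ((C s (t + a)).1, (C s (t + a)).2 - a)

lemma shiftC_eq (C : ℝ → ℝ → R4) (a s t : ℝ) :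
    shiftC C a s t = C s (t + a) - ((0 : R3), a) := by
  simp [shiftC, Prod.ext_iff]

lemma pd1_shiftC (C : ℝ → ℝ → R4) (a s t : ℝ) :
    pd1 (shiftC C a) s t = pd1 C s (t + a) := by
  unfold pd1
  simp only [shiftC_eq]
  rw [deriv_sub_const]

lemma pd2_shiftC (C : ℝ → ℝ → R4) (a s t : ℝ) :
    pd2 (shiftC C a) s t = pd2 C s (t + a) := by
  unfold pd2
  simp only [shiftC_eq]
  rw [deriv_sub_const, deriv_comp_add_const]

lemma omega_shift (a : ℝ) (p u v : R4) :
    omegaSym (p - ((0 : R3), a)) u v = Real.exp (-a) * omegaSym p u v := by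
  simp [omegaSym, Real.exp_sub, Real.exp_neg]
  ring

lemma smooth_shiftC (C : ℝ → ℝ → R4)
    (hC : ContDiff ℝ (⊤ : ℕ∞) (fun p : ℝ × ℝ => C p.1 p.2)) (a : ℝ) :
    ContDiff ℝ (⊤ : ℕ∞) (fun p : ℝ × ℝ => shiftC C a p.1 p.2) := by
  have h1 : ContDiff ℝ (⊤ : ℕ∞) (fun p : ℝ × ℝ => (p.1, p.2 + a)) :=
    ContDiff.prodMk contDiff_fst (contDiff_snd.add contDiff_const)
  have h2 := hC.comp h1
  have h3 : (fun p : ℝ × ℝ => shiftC C a p.1 p.2)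
      = fun p : ℝ × ℝ =>
        ((fun q : ℝ × ℝ => C q.1 q.2) ∘ (fun q : ℝ × ℝ => (q.1, q.2 + a))) p - ((0 : R3), a) := by
    funext p; simp [shiftC_eq, Function.comp]
  rw [h3]
  exact h2.sub contDiff_const
lemma bound_aux (C : ℝ → ℝ → R4)
    (hC : Continuous (fun p : ℝ × ℝ => C p.1 p.2))
    (hper : ∀ s t, C (s + 2 * π) t = C s t) (T : ℝ) :
    ∃ M : ℝ, ∀ s t, t ∈ Icc (-T) T → |(C s t).2| ≤ M := by
  set f : ℝ × ℝ → ℝ := fun p => |(C p.1 p.2).2| with hf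
  have hfc : Continuous f := (continuous_snd.comp hC).abs
  have hK : IsCompact (Icc (0:ℝ) (2*π) ×ˢ Icc (-T) T) := isCompact_Icc.prod isCompact_Icc
  obtain ⟨M, hM⟩ := (hK.bddAbove_image hfc.continuousOn)
  refine ⟨M, fun s t ht => ?_⟩
  have hp : Function.Periodic (fun u => f (u, t)) (2*π) := fun u => by
    simp only [f, hper]
  obtain ⟨y, hy, hxy⟩ := hp.exists_mem_Ico₀ (by positivity) s
  have : f (y, t) ∈ f '' (Icc (0:ℝ) (2*π) ×ˢ Icc (-T) T) :=
    ⟨(y, t), ⟨⟨hy.1, hy.2.le⟩, ht⟩, rfl⟩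
  calc |(C s t).2| = f (y, t) := hxy
    _ ≤ M := hM this
lemma prec_refl (K : ℝ → R3) (hK : IsLegendrianKnot K) : Prec K K := by
  have hpd : ∀ s t : ℝ, pd1 (fun s t => ((K s, t) : R4)) s t = ((deriv K s, (0:ℝ)) : R4)
      ∧ pd2 (fun s t => ((K s, t) : R4)) s t = (((0 : R3), (1:ℝ)) : R4) := by
    intro s t
    have hdK : DifferentiableAt ℝ K s := (hK.smooth.differentiable (by simp)).differentiableAt
    have h1 : HasDerivAt (fun u => ((K u, t) : R4)) ((deriv K s, (0:ℝ)) : R4) s :=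
      hdK.hasDerivAt.prodMk (hasDerivAt_const s t)
    have h2 : HasDerivAt (fun u => ((K s, u) : R4)) (((0 : R3), (1:ℝ)) : R4) t :=
      (hasDerivAt_const t (K s)).prodMk (hasDerivAt_id t)
    exact ⟨h1.deriv, h2.deriv⟩
  refine ⟨fun s t => (K s, t), ?_, ?_, ?_, ?_, ?_,
    ⟨1, one_pos, fun s t _ => rfl, fun s t _ => rfl⟩⟩
  · exact ContDiff.prodMk (hK.smooth.comp contDiff_fst) contDiff_snd
  · intro s t; simp [hK.periodic s]
  · intro s₁ t₁ s₂ t₂ h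
    rw [Prod.mk.injEq] at h
    exact ⟨h.2, hK.inj s₁ s₂ h.1⟩
  · intro s t
    rw [(hpd s t).1, (hpd s t).2, linearIndependent_fin2]
    constructor
    · simp [Prod.ext_iff]
    · intro a h
      rw [Prod.ext_iff] at h
      apply hK.immersed s
      have := h.1
      simpa using this.symm
  · intro s t
    have hdK : DifferentiableAt ℝ K s := (hK.smooth.differentiable (by simp)).differentiableAt
    have hz : deriv (fun u => (K u).2.2) s = (deriv K s).2.2 := by
      have hl : HasDerivAt (fun u => (K u).2.2) (deriv K s).2.2 s :=
        ((ContinuousLinearMap.snd ℝ ℝ ℝ).comp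
          (ContinuousLinearMap.snd ℝ ℝ (ℝ × ℝ))).hasFDerivAt.comp_hasDerivAt s hdK.hasDerivAt
      exact hl.deriv
    have hx : deriv (fun u => (K u).1) s = (deriv K s).1 := by
      have hl : HasDerivAt (fun u => (K u).1) (deriv K s).1 s :=
        (ContinuousLinearMap.fst ℝ ℝ (ℝ × ℝ)).hasFDerivAt.comp_hasDerivAt s hdK.hasDerivAt
      exact hl.deriv
    have hleg := hK.legendrian s
    rw [hz, hx] at hleg
    rw [(hpd s t).1, (hpd s t).2]
    simp only [omegaSym]
    simp [hleg]
lemma prec_trans (K₀ K₁ K₂ : ℝ → R3) (h01 : Prec K₀ K₁) (h12 : Prec K₁ K₂) :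
    Prec K₀ K₂ := by
  obtain ⟨C, hC⟩ := h01
  obtain ⟨C', hC'⟩ := h12
  obtain ⟨T, hT, hCl, hCr⟩ := hC.ends
  obtain ⟨T', hT', hCl', hCr'⟩ := hC'.ends
  obtain ⟨M, hM⟩ := bound_aux C (hC.smooth.continuous) hC.periodic T
  obtain ⟨M', hM'⟩ := bound_aux C' (hC'.smooth.continuous) hC'.periodic T'
  set a : ℝ := max T M + 1 with ha_def
  set b : ℝ := max T' M' + 1 with hb_def
  have haT : T + 1 ≤ a := by simp [ha_def, le_max_left]
  have haM : M + 1 ≤ a := by simp [ha_def, le_max_right]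
  have hbT : T' + 1 ≤ b := by simp [hb_def, le_max_left]
  have hbM : M' + 1 ≤ b := by simp [hb_def, le_max_right]
  have ha0 : 0 < a := by linarith
  have hb0 : 0 < b := by linarith
  set Cs : ℝ → ℝ → R4 := shiftC C a with hCs_def
  set Cs' : ℝ → ℝ → R4 := shiftC C' (-b) with hCs'_def
  -- descriptions of the shifted cylinders
  have hCsrT : ∀ s t : ℝ, T ≤ t + a → Cs s t = (K₁ s, t) := by
    intro s t h1
    simp only [hCs_def, shiftC, hCr s (t + a) h1]
    simp
  have hCsr : ∀ s t : ℝ, (-1:ℝ) ≤ t → Cs s t = (K₁ s, t) := fun s t ht =>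
    hCsrT s t (by linarith)
  have hCsl : ∀ s t : ℝ, t ≤ -(T + a) → Cs s t = (K₀ s, t) := by
    intro s t ht
    have h1 : t + a ≤ -T := by linarith
    simp only [hCs_def, shiftC, hCl s (t + a) h1]
    simp
  have hCs'lT : ∀ s t : ℝ, t + -b ≤ -T' → Cs' s t = (K₁ s, t) := by
    intro s t h1
    simp only [hCs'_def, shiftC, hCl' s (t + -b) h1]
    simp
  have hCs'l : ∀ s t : ℝ, t ≤ 1 → Cs' s t = (K₁ s, t) := fun s t ht =>
    hCs'lT s t (by linarith)
  have hCs'r : ∀ s t : ℝ, T' + b ≤ t → Cs' s t = (K₂ s, t) := by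
    intro s t ht
    have h1 : T' ≤ t + -b := by linarith
    simp only [hCs'_def, shiftC, hCr' s (t + -b) h1]
    simp
  -- fourth-coordinate estimates
  have hA : ∀ s t : ℝ, t ≤ 0 → (Cs s t).2 ≤ 0 := by
    intro s t ht
    rcases le_or_gt T (t + a) with h1 | h1
    · rw [hCsrT s t h1]; exact ht
    rcases le_or_gt (t + a) (-T) with h2 | h2
    · rw [hCsl s t (by linarith)]; exact ht
    · have hmem : t + a ∈ Icc (-T) T := ⟨h2.le, h1.le⟩
      have := (abs_le.mp (hM s (t + a) hmem)).2
      simp only [hCs_def, shiftC]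
      linarith
  have hB : ∀ s t : ℝ, 0 < t → 0 < (Cs' s t).2 := by
    intro s t ht
    rcases le_or_gt T' (t + -b) with h1 | h1
    · rw [hCs'r s t (by linarith)]; exact ht
    rcases le_or_gt (t + -b) (-T') with h2 | h2
    · rw [hCs'lT s t h2]; exact ht
    · have hmem : t + -b ∈ Icc (-T') T' := ⟨h2.le, h1.le⟩
      have := (abs_le.mp (hM' s (t + -b) hmem)).1
      simp only [hCs'_def, shiftC]
      linarith
  -- injectivity of the shifted cylinders
  have hshift_inj : ∀ (E : ℝ → ℝ → R4) (c : ℝ),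
      (∀ s₁ t₁ s₂ t₂, E s₁ t₁ = E s₂ t₂ → t₁ = t₂ ∧ ∃ n : ℤ, s₂ = s₁ + n * (2 * π)) →
      ∀ s₁ t₁ s₂ t₂, shiftC E c s₁ t₁ = shiftC E c s₂ t₂ →
        t₁ = t₂ ∧ ∃ n : ℤ, s₂ = s₁ + n * (2 * π) := by
    intro E c hinj s₁ t₁ s₂ t₂ h
    rw [Prod.ext_iff] at h
    have h2 : (E s₁ (t₁ + c)).2 = (E s₂ (t₂ + c)).2 := by
      have := h.2; simp only [shiftC] at this; linarith
    have h1 : (E s₁ (t₁ + c)).1 = (E s₂ (t₂ + c)).1 := h.1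
    have := hinj s₁ (t₁ + c) s₂ (t₂ + c) (Prod.ext h1 h2)
    exact ⟨by linarith [this.1], this.2⟩
  -- the glued cylinder
  set D : ℝ → ℝ → R4 := fun s t => if t ≤ 0 then Cs s t else Cs' s t with hD_def
  have hD1 : ∀ s t : ℝ, t < 1 → D s t = Cs s t := by
    intro s t ht
    rcases le_or_gt t 0 with h | h
    · simp [hD_def, h]
    · simp only [hD_def, if_neg (not_le.mpr h)]
      rw [hCs'l s t ht.le, hCsr s t (by linarith)]
  have hD2 : ∀ s t : ℝ, (-1:ℝ) < t → D s t = Cs' s t := by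
    intro s t ht
    rcases le_or_gt t 0 with h | h
    · simp only [hD_def, if_pos h]
      rw [hCs'l s t (by linarith), hCsr s t ht.le]
    · simp [hD_def, not_le.mpr h]
  refine ⟨D, ?_, ?_, ?_, ?_, ?_, ?_⟩
  · -- smoothness
    rw [contDiff_iff_contDiffAt]
    intro p
    rcases lt_or_ge p.2 1 with hp | hp
    · have hopen : IsOpen {q : ℝ × ℝ | q.2 < 1} := isOpen_Iio.preimage continuous_snd
      refine ((smooth_shiftC C hC.smooth a).contDiffAt).congr_of_eventuallyEq ?_
      filter_upwards [hopen.mem_nhds hp] with q hq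
      exact hD1 q.1 q.2 hq
    · have hopen : IsOpen {q : ℝ × ℝ | (-1:ℝ) < q.2} := isOpen_Ioi.preimage continuous_snd
      refine ((smooth_shiftC C' hC'.smooth (-b)).contDiffAt).congr_of_eventuallyEq ?_
      filter_upwards [hopen.mem_nhds (show (-1:ℝ) < p.2 by linarith)] with q hq
      exact hD2 q.1 q.2 hq
  · -- periodicity
    intro s t
    simp only [hD_def, hCs_def, hCs'_def, shiftC, hC.periodic, hC'.periodic]
  · -- injectivity
    intro s₁ t₁ s₂ t₂ h
    rcases le_or_gt t₁ 0 with h1 | h1 <;> rcases le_or_gt t₂ 0 with h2 | h2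
    · rw [hD1 s₁ t₁ (by linarith), hD1 s₂ t₂ (by linarith)] at h
      exact hshift_inj C a hC.inj s₁ t₁ s₂ t₂ h
    · exfalso
      rw [hD1 s₁ t₁ (by linarith), hD2 s₂ t₂ (by linarith)] at h
      have w1 := hA s₁ t₁ h1
      have w2 := hB s₂ t₂ h2
      rw [h] at w1
      linarith
    · exfalso
      rw [hD2 s₁ t₁ (by linarith), hD1 s₂ t₂ (by linarith)] at h
      have w1 := hB s₁ t₁ h1
      have w2 := hA s₂ t₂ h2
      rw [h] at w1
      linarith
    · rw [hD2 s₁ t₁ (by linarith), hD2 s₂ t₂ (by linarith)] at h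
      exact hshift_inj C' (-b) hC'.inj s₁ t₁ s₂ t₂ h
  · -- immersed
    intro s t
    rcases le_or_gt t 0 with h | h
    · have e1 : pd1 D s t = pd1 C s (t + a) := by
        rw [show pd1 D s t = pd1 Cs s t from by
          unfold pd1; congr 1; funext u; exact hD1 u t (by linarith)]
        exact pd1_shiftC C a s t
      have e2 : pd2 D s t = pd2 C s (t + a) := by
        have hev : (fun u => D s u) =ᶠ[nhds t] (fun u => Cs s u) := by
          filter_upwards [Iio_mem_nhds (show t < 1 by linarith)] with u hu
          exact hD1 s u hu
        rw [show pd2 D s t = pd2 Cs s t from hev.deriv_eq]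
        exact pd2_shiftC C a s t
      rw [e1, e2]
      exact hC.immersed s (t + a)
    · have e1 : pd1 D s t = pd1 C' s (t + -b) := by
        rw [show pd1 D s t = pd1 Cs' s t from by
          unfold pd1; congr 1; funext u; exact hD2 u t (by linarith)]
        exact pd1_shiftC C' (-b) s t
      have e2 : pd2 D s t = pd2 C' s (t + -b) := by
        have hev : (fun u => D s u) =ᶠ[nhds t] (fun u => Cs' s u) := by
          filter_upwards [Ioi_mem_nhds (show (-1:ℝ) < t by linarith)] with u hu
          exact hD2 s u hu
        rw [show pd2 D s t = pd2 Cs' s t from hev.deriv_eq]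
        exact pd2_shiftC C' (-b) s t
      rw [e1, e2]
      exact hC'.immersed s (t + -b)
  · -- lagrangian
    intro s t
    rcases le_or_gt t 0 with h | h
    · have e1 : pd1 D s t = pd1 C s (t + a) := by
        rw [show pd1 D s t = pd1 Cs s t from by
          unfold pd1; congr 1; funext u; exact hD1 u t (by linarith)]
        exact pd1_shiftC C a s t
      have e2 : pd2 D s t = pd2 C s (t + a) := by
        have hev : (fun u => D s u) =ᶠ[nhds t] (fun u => Cs s u) := by
          filter_upwards [Iio_mem_nhds (show t < 1 by linarith)] with u hu
          exact hD1 s u hu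
        rw [show pd2 D s t = pd2 Cs s t from hev.deriv_eq]
        exact pd2_shiftC C a s t
      have e0 : D s t = C s (t + a) - ((0 : R3), a) := by
        rw [hD1 s t (by linarith), hCs_def, shiftC_eq]
      rw [e0, e1, e2, omega_shift, hC.lagrangian s (t + a), mul_zero]
    · have e1 : pd1 D s t = pd1 C' s (t + -b) := by
        rw [show pd1 D s t = pd1 Cs' s t from by
          unfold pd1; congr 1; funext u; exact hD2 u t (by linarith)]
        exact pd1_shiftC C' (-b) s t
      have e2 : pd2 D s t = pd2 C' s (t + -b) := by
        have hev : (fun u => D s u) =ᶠ[nhds t] (fun u => Cs' s u) := by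
          filter_upwards [Ioi_mem_nhds (show (-1:ℝ) < t by linarith)] with u hu
          exact hD2 s u hu
        rw [show pd2 D s t = pd2 Cs' s t from hev.deriv_eq]
        exact pd2_shiftC C' (-b) s t
      have e0 : D s t = C' s (t + -b) - ((0 : R3), -b) := by
        rw [hD2 s t (by linarith), hCs'_def, shiftC_eq]
      rw [e0, e1, e2, omega_shift, hC'.lagrangian s (t + -b), mul_zero]
  · -- ends
    refine ⟨max (T + a) (T' + b), lt_max_of_lt_left (by linarith), ?_, ?_⟩
    · intro s t ht
      have h1 : t ≤ -(T + a) := by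
        have := le_max_left (T + a) (T' + b); linarith
      rw [hD1 s t (by linarith), hCsl s t h1]
    · intro s t ht
      have h1 : T' + b ≤ t := le_trans (le_max_right _ _) ht
      rw [hD2 s t (by linarith), hCs'r s t h1]
/-- Lagrangian concordance is transitive, and together with
reflexivity (via trivial cylinders), `≺` is a preorder on Legendrian knots. -/
theorem stmt2 :
    (∀ K₀ K₁ K₂ : ℝ → R3, IsLegendrianKnot K₀ → IsLegendrianKnot K₁ →
      IsLegendrianKnot K₂ → Prec K₀ K₁ → Prec K₁ K₂ → Prec K₀ K₂) ∧
    (∀ K : ℝ → R3, IsLegendrianKnot K → Prec K K) := by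
  exact ⟨fun K₀ K₁ K₂ _ _ _ h01 h12 => prec_trans K₀ K₁ K₂ h01 h12,
    fun K hK => prec_refl K hK⟩
end
end

section
/- Let K₀ and K₁ be Legendrian knots in (ℝ³, dz − y dx) and let H : (ℝ/2πℤ) × [0,1] → ℝ³ be a Legendrian isotopy with H(·,0) = K₀ and H(·,1) = K₁. Then K₀ ≺ K₁, i.e. there exists a Lagrangian concordance C from K₀ to K₁. Moreover, for every ε > 0 the concordance C can be chosen C⁰-close to the graph of H: there is a smooth weakly increasing surjection β : ℝ → [0,1] such that |C(s,t) − (H(s,β(t)), t)| < ε for all (s,t). -/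
open Real Set

noncomputable section

section Aux
open Filter

variable {E : Type*} [NormedAddCommGroup E] [NormedSpace ℝ E]

lemma sliceD1 {F : ℝ × ℝ → E} (hF : ContDiff ℝ (⊤ : ℕ∞) F) (s u : ℝ) :
    HasDerivAt (fun a => F (a, u)) (fderiv ℝ F (s, u) (1, 0)) s := by
  have h1 : HasDerivAt (fun a : ℝ => (a, u)) ((1 : ℝ), (0 : ℝ)) s :=
    (hasDerivAt_id s).prodMk (hasDerivAt_const s u)
  exact ((hF.differentiable (by simp) (s, u)).hasFDerivAt).comp_hasDerivAt s h1

lemma sliceD2 {F : ℝ × ℝ → E} (hF : ContDiff ℝ (⊤ : ℕ∞) F) (s u : ℝ) :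
    HasDerivAt (fun a => F (s, a)) (fderiv ℝ F (s, u) (0, 1)) u := by
  have h1 : HasDerivAt (fun a : ℝ => (s, a)) ((0 : ℝ), (1 : ℝ)) u :=
    (hasDerivAt_const u s).prodMk (hasDerivAt_id u)
  exact ((hF.differentiable (by simp) (s, u)).hasFDerivAt).comp_hasDerivAt u h1

lemma sliceDβ {F : ℝ × ℝ → E} (hF : ContDiff ℝ (⊤ : ℕ∞) F) {β : ℝ → ℝ} {b : ℝ} {t : ℝ}
    (hβ : HasDerivAt β b t) (s : ℝ) :
    HasDerivAt (fun a => F (s, β a)) (b • fderiv ℝ F (s, β t) (0, 1)) t := by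
  have h1 : HasDerivAt (fun a : ℝ => (s, β a)) ((0 : ℝ), b) t :=
    (hasDerivAt_const t s).prodMk hβ
  have h2 := ((hF.differentiable (by simp) (s, β t)).hasFDerivAt).comp_hasDerivAt t h1
  have h3 : ((0 : ℝ), b) = b • ((0 : ℝ), (1 : ℝ)) := by simp
  rw [h3, map_smul] at h2
  exact h2

lemma pdSmooth {F : ℝ × ℝ → E} (hF : ContDiff ℝ (⊤ : ℕ∞) F) (v : ℝ × ℝ) :
    ContDiff ℝ (⊤ : ℕ∞) (fun p => fderiv ℝ F p v) :=
  (hF.fderiv_right (by exact_mod_cast le_top)).clm_apply contDiff_const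

lemma symm2 {F : ℝ × ℝ → E} (hF : ContDiff ℝ (⊤ : ℕ∞) F) (p v w : ℝ × ℝ) :
    fderiv ℝ (fun q => fderiv ℝ F q v) p w = fderiv ℝ (fun q => fderiv ℝ F q w) p v := by
  have hdF : Differentiable ℝ (fderiv ℝ F) :=
    (hF.fderiv_right (m := (⊤ : ℕ∞)) (by exact_mod_cast le_top)).differentiable
      (by simp)
  have key : ∀ a : ℝ × ℝ, fderiv ℝ (fun q => fderiv ℝ F q a) p
      = (fderiv ℝ (fderiv ℝ F) p).flip a := by
    intro a
    have := fderiv_clm_apply (hdF p) (differentiableAt_const a)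
    simpa using this
  rw [key v, key w]
  simp only [ContinuousLinearMap.flip_apply]
  exact second_derivative_symmetric
    (fun y => (hF.differentiable (by simp) y).hasFDerivAt)
    ((hdF p).hasFDerivAt) w v

/-! ### components of the isotopy -/

def Xc (H : ℝ → ℝ → R3) : ℝ × ℝ → ℝ := fun p => (H p.1 p.2).1
def Yc (H : ℝ → ℝ → R3) : ℝ × ℝ → ℝ := fun p => (H p.1 p.2).2.1
def Zc (H : ℝ → ℝ → R3) : ℝ × ℝ → ℝ := fun p => (H p.1 p.2).2.2
def Xs (H : ℝ → ℝ → R3) : ℝ × ℝ → ℝ := fun p => fderiv ℝ (Xc H) p (1, 0)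
def Ys (H : ℝ → ℝ → R3) : ℝ × ℝ → ℝ := fun p => fderiv ℝ (Yc H) p (1, 0)
def Zs (H : ℝ → ℝ → R3) : ℝ × ℝ → ℝ := fun p => fderiv ℝ (Zc H) p (1, 0)
def Xu (H : ℝ → ℝ → R3) : ℝ × ℝ → ℝ := fun p => fderiv ℝ (Xc H) p (0, 1)
def Yu (H : ℝ → ℝ → R3) : ℝ × ℝ → ℝ := fun p => fderiv ℝ (Yc H) p (0, 1)
def Zu (H : ℝ → ℝ → R3) : ℝ × ℝ → ℝ := fun p => fderiv ℝ (Zc H) p (0, 1)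
/-- `α(∂ᵤH) = ∂ᵤz - y ∂ᵤx`. -/
def hC (H : ℝ → ℝ → R3) : ℝ × ℝ → ℝ := fun p => Zu H p - Yc H p * Xu H p
/-- The concordance cylinder. -/
def CC (H : ℝ → ℝ → R3) (β : ℝ → ℝ) : ℝ → ℝ → R4 := fun s t =>
  ((Xc H (s, β t), Yc H (s, β t),
    Zc H (s, β t) + deriv β t * hC H (s, β t)), t)

section main
variable {H : ℝ → ℝ → R3}

lemma hXc (hH : ContDiff ℝ (⊤ : ℕ∞) (fun p : ℝ × ℝ => H p.1 p.2)) :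
    ContDiff ℝ (⊤ : ℕ∞) (Xc H) := hH.fst
lemma hYc (hH : ContDiff ℝ (⊤ : ℕ∞) (fun p : ℝ × ℝ => H p.1 p.2)) :
    ContDiff ℝ (⊤ : ℕ∞) (Yc H) := hH.snd.fst
lemma hZc (hH : ContDiff ℝ (⊤ : ℕ∞) (fun p : ℝ × ℝ => H p.1 p.2)) :
    ContDiff ℝ (⊤ : ℕ∞) (Zc H) := hH.snd.snd
lemma hhC (hH : ContDiff ℝ (⊤ : ℕ∞) (fun p : ℝ × ℝ => H p.1 p.2)) :
    ContDiff ℝ (⊤ : ℕ∞) (hC H) :=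
  (pdSmooth (hZc hH) _).sub ((hYc hH).mul (pdSmooth (hXc hH) _))

variable (hH : ContDiff ℝ (⊤ : ℕ∞) (fun p : ℝ × ℝ => H p.1 p.2))
variable (hleg : ∀ u ∈ Icc (0:ℝ) 1, IsLegendrianKnot fun s => H s u)
include hH hleg

/-- the pointwise Legendrian identity `Zs = Y * Xs`. -/
lemma legId : ∀ (s : ℝ), ∀ u ∈ Icc (0:ℝ) 1, Zs H (s, u) = Yc H (s, u) * Xs H (s, u) := by
  intro s u hu
  have h := (hleg u hu).legendrian s
  have e1 : deriv (fun a => ((fun s => H s u) a).2.2) s = Zs H (s, u) :=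
    (sliceD1 (hZc hH) s u).deriv
  have e2 : deriv (fun a => ((fun s => H s u) a).1) s = Xs H (s, u) :=
    (sliceD1 (hXc hH) s u).deriv
  rw [e1, e2] at h
  exact h

/-- the knots of the family are immersed in the (x,y)-projection. -/
lemma immXY : ∀ (s : ℝ), ∀ u ∈ Icc (0:ℝ) 1, ¬(Xs H (s, u) = 0 ∧ Ys H (s, u) = 0) := by
  intro s u hu ⟨hx, hy⟩
  have h := (hleg u hu).immersed s
  have hz : Zs H (s, u) = 0 := by rw [legId hH hleg s u hu, hx, mul_zero]
  have hd : HasDerivAt (fun a => H a u) ((Xs H (s,u), Ys H (s,u), Zs H (s,u)) : R3) s :=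
    (sliceD1 (hXc hH) s u).prodMk ((sliceD1 (hYc hH) s u).prodMk (sliceD1 (hZc hH) s u))
  rw [hd.deriv, hx, hy, hz] at h
  exact h rfl

/-- periodicity of the family in `s`. -/
lemma perH : ∀ u ∈ Icc (0:ℝ) 1, ∀ s, H (s + 2 * π) u = H s u :=
  fun u hu s => (hleg u hu).periodic s

/-- periodicity of `hC` in `s` for interior `u`. -/
lemma perhC : ∀ u ∈ Ioo (0:ℝ) 1, ∀ s, hC H (s + 2 * π, u) = hC H (s, u) := by
  intro u hu s
  have hnb : Ioo (0:ℝ) 1 ∈ nhds u := isOpen_Ioo.mem_nhds hu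
  have keyX : Xu H (s + 2 * π, u) = Xu H (s, u) := by
    have e1 : deriv (fun v => Xc H (s + 2 * π, v)) u = Xu H (s + 2 * π, u) :=
      (sliceD2 (hXc hH) (s + 2 * π) u).deriv
    have e2 : deriv (fun v => Xc H (s, v)) u = Xu H (s, u) :=
      (sliceD2 (hXc hH) s u).deriv
    rw [← e1, ← e2]
    apply Filter.EventuallyEq.deriv_eq
    filter_upwards [hnb] with v hv
    show (H (s + 2 * π) v).1 = (H s v).1
    rw [perH hH hleg v (Ioo_subset_Icc_self hv) s]
  have keyZ : Zu H (s + 2 * π, u) = Zu H (s, u) := by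
    have e1 : deriv (fun v => Zc H (s + 2 * π, v)) u = Zu H (s + 2 * π, u) :=
      (sliceD2 (hZc hH) (s + 2 * π) u).deriv
    have e2 : deriv (fun v => Zc H (s, v)) u = Zu H (s, u) :=
      (sliceD2 (hZc hH) s u).deriv
    rw [← e1, ← e2]
    apply Filter.EventuallyEq.deriv_eq
    filter_upwards [hnb] with v hv
    show (H (s + 2 * π) v).2.2 = (H s v).2.2
    rw [perH hH hleg v (Ioo_subset_Icc_self hv) s]
  have keyY : Yc H (s + 2 * π, u) = Yc H (s, u) := by
    show (H (s + 2 * π) u).2.1 = (H s u).2.1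
    rw [perH hH hleg u (Ioo_subset_Icc_self hu) s]
  unfold hC
  rw [keyX, keyY, keyZ]

/-- mixed-partials identity: `∂ₛ h = Xs·Yu - Ys·Xu` on the interior. -/
lemma keyId : ∀ (s : ℝ), ∀ u ∈ Ioo (0:ℝ) 1,
    fderiv ℝ (hC H) (s, u) (1, 0) = Xs H (s, u) * Yu H (s, u) - Ys H (s, u) * Xu H (s, u) := by
  intro s u hu
  set p : ℝ × ℝ := (s, u) with hp
  -- ∂ₛ h via slices
  have d1 : HasDerivAt (fun a => hC H (a, u))
      (fderiv ℝ (Zu H) p (1, 0) - (fderiv ℝ (Yc H) p (1,0) * Xu H p + Yc H p * fderiv ℝ (Xu H) p (1,0))) s := by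
    have hZuD := sliceD1 (pdSmooth (hZc hH) ((0:ℝ),(1:ℝ))) s u
    have hYD := sliceD1 (hYc hH) s u
    have hXuD := sliceD1 (pdSmooth (hXc hH) ((0:ℝ),(1:ℝ))) s u
    exact hZuD.sub (hYD.mul hXuD)
  have d2 : HasDerivAt (fun a => hC H (a, u)) (fderiv ℝ (hC H) p (1, 0)) s :=
    sliceD1 (hhC hH) s u
  have e0 : fderiv ℝ (hC H) p (1, 0)
      = fderiv ℝ (Zu H) p (1, 0) - (Ys H p * Xu H p + Yc H p * fderiv ℝ (Xu H) p (1,0)) := by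
    rw [d2.unique d1]; rfl
  -- symmetry of second derivatives
  have sX : fderiv ℝ (Xu H) p (1, 0) = fderiv ℝ (Xs H) p (0, 1) := symm2 (hXc hH) p _ _
  have sZ : fderiv ℝ (Zu H) p (1, 0) = fderiv ℝ (Zs H) p (0, 1) := symm2 (hZc hH) p _ _
  -- differentiate the Legendrian identity in u
  have hnb : Ioo (0:ℝ) 1 ∈ nhds u := isOpen_Ioo.mem_nhds hu
  have dzsu : fderiv ℝ (Zs H) p (0, 1)
      = Yu H p * Xs H p + Yc H p * fderiv ℝ (Xs H) p (0, 1) := by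
    have dl : HasDerivAt (fun v => Zs H (s, v)) (fderiv ℝ (Zs H) p (0, 1)) u :=
      sliceD2 (pdSmooth (hZc hH) _) s u
    have dr : HasDerivAt (fun v => Yc H (s, v) * Xs H (s, v))
        (fderiv ℝ (Yc H) p (0,1) * Xs H p + Yc H p * fderiv ℝ (Xs H) p (0, 1)) u :=
      (sliceD2 (hYc hH) s u).mul (sliceD2 (pdSmooth (hXc hH) _) s u)
    have heq : (fun v => Zs H (s, v)) =ᶠ[nhds u] (fun v => Yc H (s, v) * Xs H (s, v)) := by
      filter_upwards [hnb] with v hv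
      exact legId hH hleg s v (Ioo_subset_Icc_self hv)
    have := dl.deriv
    rw [heq.deriv_eq, dr.deriv] at this
    rw [← this]; rfl
  rw [e0, sZ, dzsu, sX]
  ring
end main

section main2
variable {H : ℝ → ℝ → R3}

lemma deriv_zero_of_min' {f : ℝ → ℝ} (h0 : ∀ x, 0 ≤ f x) {t : ℝ} (ht : f t = 0) :
    deriv f t = 0 :=
  IsLocalMin.deriv_eq_zero (Filter.Eventually.of_forall (fun y => ht ▸ h0 y))

lemma deriv_zero_of_max' {f : ℝ → ℝ} (h1 : ∀ x, f x ≤ 1) {t : ℝ} (ht : f t = 1) :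
    deriv f t = 0 :=
  IsLocalMax.deriv_eq_zero (Filter.Eventually.of_forall (fun y => ht ▸ h1 y))

lemma betaIoo {β : ℝ → ℝ} (hβmem : ∀ t, β t ∈ Icc (0:ℝ) 1) {t : ℝ}
    (hd : deriv β t ≠ 0) : β t ∈ Ioo (0:ℝ) 1 := by
  rcases eq_or_lt_of_le (hβmem t).1 with h0 | h0
  · exact absurd (deriv_zero_of_min' (fun x => (hβmem x).1) h0.symm) hd
  rcases eq_or_lt_of_le (hβmem t).2 with h1 | h1
  · exact absurd (deriv_zero_of_max' (fun x => (hβmem x).2) h1) hd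
  exact ⟨h0, h1⟩

section pds
variable {β : ℝ → ℝ}

lemma hasDerivAt_beta (hβC : ContDiff ℝ (⊤ : ℕ∞) β) (t : ℝ) :
    HasDerivAt β (deriv β t) t :=
  ((hβC.differentiable (by simp)) t).hasDerivAt

lemma hb1C (hβC : ContDiff ℝ (⊤ : ℕ∞) β) : ContDiff ℝ (⊤ : ℕ∞) (deriv β) :=
  (contDiff_infty_iff_deriv.1 hβC).2

lemma pd1CC (hH : ContDiff ℝ (⊤ : ℕ∞) (fun p : ℝ × ℝ => H p.1 p.2))
    (hβC : ContDiff ℝ (⊤ : ℕ∞) β) (s t : ℝ) :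
    pd1 (CC H β) s t =
      ((Xs H (s, β t), Ys H (s, β t),
        Zs H (s, β t) + deriv β t * fderiv ℝ (hC H) (s, β t) (1, 0)), 0) := by
  have h : HasDerivAt (fun a => CC H β a t)
      (((Xs H (s, β t), Ys H (s, β t),
        Zs H (s, β t) + deriv β t * fderiv ℝ (hC H) (s, β t) (1, 0)), 0) : R4) s := by
    exact ((sliceD1 (hXc hH) s (β t)).prodMk ((sliceD1 (hYc hH) s (β t)).prodMk
      ((sliceD1 (hZc hH) s (β t)).add ((sliceD1 (hhC hH) s (β t)).const_mul (deriv β t))))).prodMk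
      (hasDerivAt_const s t)
  exact h.deriv

lemma pd2CC (hH : ContDiff ℝ (⊤ : ℕ∞) (fun p : ℝ × ℝ => H p.1 p.2))
    (hβC : ContDiff ℝ (⊤ : ℕ∞) β) (s t : ℝ) :
    pd2 (CC H β) s t =
      ((deriv β t * Xu H (s, β t), deriv β t * Yu H (s, β t),
        deriv β t * Zu H (s, β t) + (deriv (deriv β) t * hC H (s, β t)
          + deriv β t * (deriv β t * fderiv ℝ (hC H) (s, β t) (0, 1)))), 1) := by
  have hb := hasDerivAt_beta hβC t
  have hb2 : HasDerivAt (deriv β) (deriv (deriv β) t) t := hasDerivAt_beta (hb1C hβC) t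
  have hX := sliceDβ (hXc hH) hb s
  have hY := sliceDβ (hYc hH) hb s
  have hZ := sliceDβ (hZc hH) hb s
  have hh := sliceDβ (hhC hH) hb s
  simp only [smul_eq_mul] at hX hY hZ hh
  have h : HasDerivAt (fun a => CC H β s a)
      (((deriv β t * Xu H (s, β t), deriv β t * Yu H (s, β t),
        deriv β t * Zu H (s, β t) + (deriv (deriv β) t * hC H (s, β t)
          + deriv β t * (deriv β t * fderiv ℝ (hC H) (s, β t) (0, 1)))), 1) : R4) t :=
    (hX.prodMk (hY.prodMk (hZ.add (hb2.mul hh)))).prodMk (hasDerivAt_id t)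
  exact h.deriv

lemma lagCC (hH : ContDiff ℝ (⊤ : ℕ∞) (fun p : ℝ × ℝ => H p.1 p.2))
    (hleg : ∀ u ∈ Icc (0:ℝ) 1, IsLegendrianKnot fun s => H s u)
    (hβC : ContDiff ℝ (⊤ : ℕ∞) β) (hβmem : ∀ t, β t ∈ Icc (0:ℝ) 1) :
    IsLagrangianCyl (CC H β) := by
  intro s t
  rw [pd1CC hH hβC, pd2CC hH hβC]
  have hY : (CC H β s t).1.2.1 = Yc H (s, β t) := rfl
  have hZs : Zs H (s, β t) = Yc H (s, β t) * Xs H (s, β t) :=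
    legId hH hleg s (β t) (hβmem t)
  simp only [omegaSym, hY]
  rcases eq_or_ne (deriv β t) 0 with hc | hc
  · simp only [hc, hZs]; ring
  · have hkey := keyId hH hleg s (β t) (betaIoo hβmem hc)
    simp only [hkey, hZs]; ring

lemma immCC (hH : ContDiff ℝ (⊤ : ℕ∞) (fun p : ℝ × ℝ => H p.1 p.2))
    (hleg : ∀ u ∈ Icc (0:ℝ) 1, IsLegendrianKnot fun s => H s u)
    (hβC : ContDiff ℝ (⊤ : ℕ∞) β) (hβmem : ∀ t, β t ∈ Icc (0:ℝ) 1) (s t : ℝ) :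
    LinearIndependent ℝ ![pd1 (CC H β) s t, pd2 (CC H β) s t] := by
  rw [linearIndependent_fin2]
  constructor
  · simp only [Matrix.cons_val_one, Matrix.head_cons]
    rw [pd2CC hH hβC]
    intro h
    exact one_ne_zero (congrArg Prod.snd h)
  · intro a
    simp only [Matrix.cons_val_one, Matrix.head_cons, Matrix.cons_val_zero]
    rw [pd1CC hH hβC, pd2CC hH hβC]
    intro h
    have h2 : a = 0 := by
      have := congrArg Prod.snd h
      simpa using this
    subst h2
    rw [zero_smul] at h
    have h1 := congrArg (fun q : R4 => q.1.1) h
    have h3 := congrArg (fun q : R4 => q.1.2.1) h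
    exact immXY hH hleg s (β t) (hβmem t) ⟨h1.symm, h3.symm⟩

end pds
end main2

section inj
variable {H : ℝ → ℝ → R3}

/-- uniform local injectivity of the (x,y)-projections. -/
lemma localInj (hH : ContDiff ℝ (⊤ : ℕ∞) (fun p : ℝ × ℝ => H p.1 p.2))
    (hleg : ∀ u ∈ Icc (0:ℝ) 1, IsLegendrianKnot fun s => H s u) :
    ∃ r, 0 < r ∧ r ≤ π ∧ ∀ u ∈ Icc (0:ℝ) 1, ∀ s₁ ∈ Icc (0:ℝ) (2*π), ∀ s₂,
      |s₂ - s₁| ≤ r → Xc H (s₂, u) = Xc H (s₁, u) → Yc H (s₂, u) = Yc H (s₁, u) →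
      s₂ = s₁ := by
  have pi_pos := Real.pi_pos
  set A : Set (ℝ × ℝ) := Icc (-π) (3*π) ×ˢ Icc (0:ℝ) 1 with hA
  have hAcp : IsCompact A := isCompact_Icc.prod isCompact_Icc
  have hAne : A.Nonempty := ⟨(0, 0), by
    simp only [hA, Set.mem_prod, Set.mem_Icc]
    constructor <;> constructor <;> nlinarith⟩
  have hcont1 : Continuous (fun p : ℝ × ℝ => ‖(Xs H p, Ys H p)‖) :=
    ((pdSmooth (hXc hH) _).continuous.prodMk (pdSmooth (hYc hH) _).continuous).norm
  obtain ⟨p₀, hp₀A, hp₀⟩ := hAcp.exists_isMinOn hAne hcont1.continuousOn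
  set δ : ℝ := ‖(Xs H p₀, Ys H p₀)‖ with hδdef
  have hδ : 0 < δ := by
    rw [hδdef, norm_pos_iff]
    intro h
    have h1 : Xs H p₀ = 0 := congrArg Prod.fst h
    have h2 : Ys H p₀ = 0 := congrArg Prod.snd h
    exact immXY hH hleg p₀.1 p₀.2 hp₀A.2 ⟨(by rw [← h1]), (by rw [← h2])⟩
  have hcont2 : Continuous (fun p : ℝ × ℝ =>
      ‖(fderiv ℝ (Xs H) p (1,0), fderiv ℝ (Ys H) p (1,0))‖) :=
    ((pdSmooth (pdSmooth (hXc hH) _) _).continuous.prodMk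
      (pdSmooth (pdSmooth (hYc hH) _) _).continuous).norm
  obtain ⟨q₀, -, hq₀⟩ := hAcp.exists_isMaxOn hAne hcont2.continuousOn
  set M : ℝ := ‖(fderiv ℝ (Xs H) q₀ (1,0), fderiv ℝ (Ys H) q₀ (1,0))‖ + 1 with hMdef
  have hM1 : 1 ≤ M := by
    have := norm_nonneg ((fderiv ℝ (Xs H) q₀ (1,0), fderiv ℝ (Ys H) q₀ (1,0)) : ℝ × ℝ)
    linarith
  have hM0 : 0 < M := by linarith
  refine ⟨min (δ/(2*M)) π, lt_min (by positivity) pi_pos, min_le_right _ _, ?_⟩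
  intro u hu s₁ hs₁ s₂ hΔ hx hy
  by_contra hne
  have hΔ1 : |s₂ - s₁| ≤ δ/(2*M) := hΔ.trans (min_le_left _ _)
  have hΔ2 : |s₂ - s₁| ≤ π := hΔ.trans (min_le_right _ _)
  have habs1 := le_abs_self (s₂ - s₁)
  have habs2 := neg_abs_le (s₂ - s₁)
  rw [Set.mem_Icc] at hs₁
  have hs₂m : s₂ ∈ Icc (-π) (3*π) := Set.mem_Icc.2 ⟨by linarith, by linarith⟩
  have hs₁m : s₁ ∈ Icc (-π) (3*π) := Set.mem_Icc.2 ⟨by linarith, by linarith⟩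
  have hsub : Set.uIcc s₁ s₂ ⊆ Icc (-π) (3*π) := Set.uIcc_subset_Icc hs₁m hs₂m
  have hmemA : ∀ a ∈ Set.uIcc s₁ s₂, ((a, u) : ℝ × ℝ) ∈ A := by
    intro a ha
    exact Set.mem_prod.2 ⟨hsub ha, hu⟩
  have haub : ∀ a ∈ Set.uIcc s₁ s₂, |a - s₁| ≤ |s₂ - s₁| := by
    intro a ha
    rcases Set.mem_uIcc.1 ha with ⟨h1, h2⟩ | ⟨h1, h2⟩ <;>
      (rw [abs_sub_le_iff]; constructor <;> linarith)
  set φ' : ℝ → ℝ × ℝ := fun a => (Xs H (a, u), Ys H (a, u)) with hφ'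
  have hd1 : ∀ a, HasDerivAt (fun a => ((Xc H (a, u), Yc H (a, u)) : ℝ × ℝ)) (φ' a) a :=
    fun a => (sliceD1 (hXc hH) a u).prodMk (sliceD1 (hYc hH) a u)
  have hd2 : ∀ a, HasDerivAt φ'
      ((fderiv ℝ (Xs H) (a,u) (1,0), fderiv ℝ (Ys H) (a,u) (1,0)) : ℝ × ℝ) a :=
    fun a => (sliceD1 (pdSmooth (hXc hH) _) a u).prodMk (sliceD1 (pdSmooth (hYc hH) _) a u)
  -- first MVT: φ' varies slowly
  have step1 : ∀ a ∈ Set.uIcc s₁ s₂, ‖φ' a - φ' s₁‖ ≤ (M - 1) * |s₂ - s₁| := by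
    intro a ha
    have := Convex.norm_image_sub_le_of_norm_hasDerivWithin_le
      (f := φ') (f' := fun a => ((fderiv ℝ (Xs H) (a,u) (1,0), fderiv ℝ (Ys H) (a,u) (1,0)) : ℝ × ℝ))
      (s := Set.uIcc s₁ s₂) (C := M - 1)
      (fun x hx => (hd2 x).hasDerivWithinAt)
      (fun x hx => by
        have := hq₀ (hmemA x hx)
        simp only [Set.mem_setOf_eq] at this
        rw [hMdef]; linarith [this])
      (convex_uIcc s₁ s₂) Set.left_mem_uIcc ha
    calc ‖φ' a - φ' s₁‖ ≤ (M - 1) * ‖a - s₁‖ := this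
      _ ≤ (M - 1) * |s₂ - s₁| := by
          rw [Real.norm_eq_abs]
          exact mul_le_mul_of_nonneg_left (haub a ha) (by linarith)
  -- second MVT
  set ψ : ℝ → ℝ × ℝ := fun a => (Xc H (a, u), Yc H (a, u)) - a • φ' s₁ with hψ
  have hdψ : ∀ a, HasDerivAt ψ (φ' a - φ' s₁) a := by
    intro a
    have h2 : HasDerivAt (fun y : ℝ => y • φ' s₁) ((1:ℝ) • φ' s₁) a :=
      (hasDerivAt_id a).smul_const (φ' s₁)
    rw [one_smul] at h2
    exact (hd1 a).sub h2
  have step2 : ‖ψ s₂ - ψ s₁‖ ≤ ((M - 1) * |s₂ - s₁|) * ‖s₂ - s₁‖ :=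
    Convex.norm_image_sub_le_of_norm_hasDerivWithin_le
      (fun x hx => (hdψ x).hasDerivWithinAt)
      (fun x hx => step1 x hx)
      (convex_uIcc s₁ s₂) Set.left_mem_uIcc Set.right_mem_uIcc
  have hψeq : ψ s₂ - ψ s₁ = -((s₂ - s₁) • φ' s₁) := by
    have hpair : ((Xc H (s₂, u), Yc H (s₂, u)) : ℝ × ℝ) = (Xc H (s₁, u), Yc H (s₁, u)) :=
      Prod.ext hx hy
    show ((Xc H (s₂, u), Yc H (s₂, u)) - s₂ • φ' s₁)
        - ((Xc H (s₁, u), Yc H (s₁, u)) - s₁ • φ' s₁) = -((s₂ - s₁) • φ' s₁)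
    rw [hpair, sub_smul]
    abel
  have hlow : |s₂ - s₁| * δ ≤ ‖ψ s₂ - ψ s₁‖ := by
    rw [hψeq, norm_neg, norm_smul, Real.norm_eq_abs]
    apply mul_le_mul_of_nonneg_left _ (abs_nonneg _)
    exact hp₀ (hmemA s₁ Set.left_mem_uIcc)
  have hΔpos : 0 < |s₂ - s₁| := abs_pos.2 (sub_ne_zero.2 hne)
  rw [Real.norm_eq_abs] at step2
  have key : |s₂ - s₁| * δ ≤ |s₂ - s₁| * ((M - 1) * |s₂ - s₁|) := by
    nlinarith [hlow.trans step2]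
  have h1 : δ ≤ (M - 1) * |s₂ - s₁| := le_of_mul_le_mul_left key hΔpos
  have hδ2M : 0 ≤ δ / (2 * M) := by positivity
  have h2 : (M - 1) * |s₂ - s₁| ≤ (M - 1) * (δ / (2 * M)) :=
    mul_le_mul_of_nonneg_left hΔ1 (by linarith)
  have h3 : (M - 1) * (δ / (2 * M)) ≤ M * (δ / (2 * M)) :=
    mul_le_mul_of_nonneg_right (by linarith) hδ2M
  have h4 : M * (δ / (2 * M)) = δ / 2 := by field_simp
  have h5 : δ ≤ δ / 2 := h4 ▸ (h1.trans (h2.trans h3))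
  linarith [hδ, h5]
end inj

section inj2
variable {H : ℝ → ℝ → R3}

/-- uniform separation of distant points on the knots. -/
lemma sepBound (hH : ContDiff ℝ (⊤ : ℕ∞) (fun p : ℝ × ℝ => H p.1 p.2))
    (hleg : ∀ u ∈ Icc (0:ℝ) 1, IsLegendrianKnot fun s => H s u)
    {r : ℝ} (hr : 0 < r) (hrπ : r ≤ π) :
    ∃ η > 0, ∀ u ∈ Icc (0:ℝ) 1, ∀ s₁ ∈ Icc (0:ℝ) (2*π), ∀ s₂,
      r ≤ |s₂ - s₁| → |s₂ - s₁| ≤ π → η ≤ ‖H s₂ u - H s₁ u‖ := by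
  have pi_pos := Real.pi_pos
  set S : Set (ℝ × ℝ × ℝ) := Icc (0:ℝ) (2*π) ×ˢ (Icc r π ×ˢ Icc (0:ℝ) 1) with hS
  have hScp : IsCompact S := isCompact_Icc.prod (isCompact_Icc.prod isCompact_Icc)
  have hSne : S.Nonempty := ⟨(0, r, 0), by
    simp only [hS, Set.mem_prod, Set.mem_Icc]
    refine ⟨⟨le_refl _, by linarith⟩, ⟨le_refl _, hrπ⟩, le_refl _, zero_le_one⟩⟩
  have hHc : Continuous (fun p : ℝ × ℝ => H p.1 p.2) := hH.continuous
  set G : ℝ × ℝ × ℝ → ℝ := fun q =>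
    min ‖H (q.1 + q.2.1) q.2.2 - H q.1 q.2.2‖ ‖H (q.1 - q.2.1) q.2.2 - H q.1 q.2.2‖ with hG
  have hGc : Continuous G := by
    apply Continuous.min
    · apply Continuous.norm
      apply Continuous.sub
      · exact hHc.comp ((continuous_fst.add (continuous_fst.comp continuous_snd)).prodMk
          (continuous_snd.comp continuous_snd))
      · exact hHc.comp (continuous_fst.prodMk (continuous_snd.comp continuous_snd))
    · apply Continuous.norm
      apply Continuous.sub
      · exact hHc.comp ((continuous_fst.sub (continuous_fst.comp continuous_snd)).prodMk
          (continuous_snd.comp continuous_snd))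
      · exact hHc.comp (continuous_fst.prodMk (continuous_snd.comp continuous_snd))
  obtain ⟨q₀, hq₀S, hq₀⟩ := hScp.exists_isMinOn hSne hGc.continuousOn
  have hpos : ∀ q ∈ S, 0 < G q := by
    rintro ⟨s, d, u⟩ ⟨hs, hd, hu⟩
    simp only [Set.mem_Icc] at hs hd hu
    have key : ∀ e : ℝ, r ≤ |e| → |e| ≤ π → (0:ℝ) < ‖H (s + e) u - H s u‖ := by
      intro e he1 he2
      rw [norm_pos_iff, sub_ne_zero]
      intro heq
      obtain ⟨n, hn⟩ := (hleg u hu).inj s (s + e) heq.symm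
      have hne : e = n * (2*π) := by linarith
      rcases lt_trichotomy n 0 with hn0 | hn0 | hn0
      · have : (n : ℝ) ≤ -1 := by exact_mod_cast (by omega : n ≤ -1)
        have : e ≤ -(2*π) := by nlinarith
        have : |e| ≥ 2*π := by rw [abs_of_nonpos (by nlinarith)]; linarith
        linarith
      · subst hn0; simp at hne; subst hne; simp at he1; linarith
      · have : (1:ℝ) ≤ (n:ℝ) := by exact_mod_cast hn0
        have : e ≥ 2*π := by nlinarith
        have : |e| ≥ 2*π := by rw [abs_of_nonneg (by nlinarith)]; linarith
        linarith
    have h0d : 0 ≤ d := by linarith [hd.1]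
    apply lt_min
    · have := key d (by rw [abs_of_nonneg h0d]; exact hd.1) (by rw [abs_of_nonneg h0d]; exact hd.2)
      simpa using this
    · have := key (-d) (by rw [abs_neg, abs_of_nonneg h0d]; exact hd.1)
        (by rw [abs_neg, abs_of_nonneg h0d]; exact hd.2)
      simpa [sub_eq_add_neg] using this
  refine ⟨G q₀, hpos q₀ hq₀S, ?_⟩
  intro u hu s₁ hs₁ s₂ h1 h2
  have hd : |s₂ - s₁| ∈ Icc r π := ⟨h1, h2⟩
  have hmem : ((s₁, |s₂ - s₁|, u) : ℝ × ℝ × ℝ) ∈ S := ⟨hs₁, hd, hu⟩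
  have := hq₀ hmem
  simp only [Set.mem_setOf_eq] at this
  rcases le_or_gt s₁ s₂ with hc | hc
  · have he : s₁ + |s₂ - s₁| = s₂ := by rw [abs_of_nonneg (by linarith)]; ring
    calc G q₀ ≤ G (s₁, |s₂ - s₁|, u) := this
      _ ≤ ‖H (s₁ + |s₂ - s₁|) u - H s₁ u‖ := min_le_left _ _
      _ = ‖H s₂ u - H s₁ u‖ := by rw [he]
  · have he : s₁ - |s₂ - s₁| = s₂ := by rw [abs_of_nonpos (by linarith)]; ring
    calc G q₀ ≤ G (s₁, |s₂ - s₁|, u) := this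
      _ ≤ ‖H (s₁ - |s₂ - s₁|) u - H s₁ u‖ := min_le_right _ _
      _ = ‖H s₂ u - H s₁ u‖ := by rw [he]

/-- uniform bound for `hC` on the compact region. -/
lemma maxhC (hH : ContDiff ℝ (⊤ : ℕ∞) (fun p : ℝ × ℝ => H p.1 p.2)) :
    ∃ Mh > 0, ∀ s ∈ Icc (-(2*π)) (4*π), ∀ u ∈ Icc (0:ℝ) 1, |hC H (s, u)| ≤ Mh := by
  set A : Set (ℝ × ℝ) := Icc (-(2*π)) (4*π) ×ˢ Icc (0:ℝ) 1 with hA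
  have pi_pos := Real.pi_pos
  have hAcp : IsCompact A := isCompact_Icc.prod isCompact_Icc
  have hAne : A.Nonempty := ⟨(0, 0), by
    simp only [hA, Set.mem_prod, Set.mem_Icc]
    refine ⟨⟨by linarith, by linarith⟩, le_refl _, zero_le_one⟩⟩
  obtain ⟨q₀, -, hq₀⟩ := hAcp.exists_isMaxOn hAne ((hhC hH).continuous.abs.continuousOn)
  refine ⟨|hC H q₀| + 1, by positivity, ?_⟩
  intro s hs u hu
  have := hq₀ (show ((s, u) : ℝ × ℝ) ∈ A from ⟨hs, hu⟩)
  simp only [Set.mem_setOf_eq] at this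
  linarith

end inj2

lemma expNegInvGlue.monotone' : Monotone expNegInvGlue := by
  intro x y hxy
  rcases le_or_gt x 0 with hx | hx
  · rw [expNegInvGlue.zero_of_nonpos hx]; exact expNegInvGlue.nonneg y
  · have hy : 0 < y := lt_of_lt_of_le hx hxy
    simp only [expNegInvGlue, if_neg (not_le.2 hx), if_neg (not_le.2 hy)]
    apply Real.exp_le_exp.2
    simp only [neg_le_neg_iff]
    exact inv_anti₀ hx hxy

lemma smoothTransition_monotone : Monotone Real.smoothTransition := by
  intro x y hxy
  rcases le_or_gt x 0 with hx | hx
  · rw [Real.smoothTransition.zero_of_nonpos hx]; exact Real.smoothTransition.nonneg y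
  · have hy : 0 < y := lt_of_lt_of_le hx hxy
    unfold Real.smoothTransition
    rw [div_le_div_iff₀ (Real.smoothTransition.pos_denom x) (Real.smoothTransition.pos_denom y)]
    have h1 : expNegInvGlue x ≤ expNegInvGlue y := expNegInvGlue.monotone' hxy
    have h2 : expNegInvGlue (1 - y) ≤ expNegInvGlue (1 - x) :=
      expNegInvGlue.monotone' (by linarith)
    nlinarith [expNegInvGlue.nonneg x, expNegInvGlue.nonneg y,
      expNegInvGlue.nonneg (1-x), expNegInvGlue.nonneg (1-y)]

/-- Construction of the slow smooth step function. -/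
lemma exists_beta (c : ℝ) (hc : 0 < c) :
    ∃ (β : ℝ → ℝ) (T : ℝ), 0 < T ∧ ContDiff ℝ (⊤ : ℕ∞) β ∧ Monotone β ∧
      (∀ t, β t ∈ Icc (0:ℝ) 1) ∧ Set.range β = Icc (0:ℝ) 1 ∧
      (∀ t, t ≤ -T → β t = 0) ∧ (∀ t, T ≤ t → β t = 1) ∧
      (∀ t, |deriv β t| ≤ c) := by
  set σ := Real.smoothTransition with hσ
  have hσC : ContDiff ℝ (⊤ : ℕ∞) σ := Real.smoothTransition.contDiff
  have hσd : ContDiff ℝ (⊤ : ℕ∞) (deriv σ) := (contDiff_infty_iff_deriv.1 hσC).2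
  -- bound on |σ'|
  obtain ⟨x₀, -, hx₀⟩ := isCompact_Icc.exists_isMaxOn (Set.nonempty_Icc.2 zero_le_one)
    (f := fun x => |deriv σ x|) (hσd.continuous.abs.continuousOn)
  set B : ℝ := |deriv σ x₀| + 1 with hB
  have hB0 : 0 < B := by positivity
  have hBd : ∀ x, |deriv σ x| ≤ B := by
    intro x
    rcases le_or_gt x 0 with hx | hx
    · rw [deriv_zero_of_min' (fun y => Real.smoothTransition.nonneg y)
        (Real.smoothTransition.zero_of_nonpos hx)]
      simp [hB0.le]
    rcases le_or_gt 1 x with hx1 | hx1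
    · rw [deriv_zero_of_max' (fun y => Real.smoothTransition.le_one y)
        (Real.smoothTransition.one_of_one_le hx1)]
      simp [hB0.le]
    · have := hx₀ (Set.mem_Icc.2 ⟨hx.le, hx1.le⟩)
      simp only [Set.mem_setOf_eq] at this
      linarith [this]
  set T : ℝ := B / c with hT
  have hT0 : 0 < T := div_pos hB0 hc
  set β : ℝ → ℝ := fun t => σ (t / (2 * T) + 1 / 2) with hβdef
  have haff : ∀ t, HasDerivAt (fun t : ℝ => t / (2 * T) + 1 / 2) (1 / (2 * T)) t := by
    intro t
    simpa using ((hasDerivAt_id t).div_const (2 * T)).add_const (1/2)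
  have haffC : ContDiff ℝ (⊤ : ℕ∞) (fun t : ℝ => t / (2 * T) + 1 / 2) :=
    (contDiff_id.div_const _).add contDiff_const
  have hβC : ContDiff ℝ (⊤ : ℕ∞) β := hσC.comp haffC
  have hβd : ∀ t, HasDerivAt β (deriv σ (t / (2 * T) + 1 / 2) * (1 / (2 * T))) t := by
    intro t
    exact ((hσC.differentiable (by simp) _).hasDerivAt).comp t (haff t)
  have hβmem : ∀ t, β t ∈ Icc (0:ℝ) 1 :=
    fun t => ⟨Real.smoothTransition.nonneg _, Real.smoothTransition.le_one _⟩
  refine ⟨β, T, hT0, hβC, ?_, hβmem, ?_, ?_, ?_, ?_⟩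
  · exact fun x y hxy => smoothTransition_monotone (by
      have h2T : (0:ℝ) < 2 * T := by linarith
      exact add_le_add_left (div_le_div_of_nonneg_right hxy h2T.le |>.trans_eq rfl) _)
  · -- range
    apply Set.Subset.antisymm
    · rintro x ⟨t, rfl⟩; exact hβmem t
    · have h1 : β (-T) = 0 := by
        have : (-T) / (2 * T) + 1 / 2 = 0 := by field_simp; ring
        simp only [hβdef, this]; exact Real.smoothTransition.zero
      have h2 : β T = 1 := by
        have : T / (2 * T) + 1 / 2 = 1 := by field_simp; ring
        simp only [hβdef, this]; exact Real.smoothTransition.one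
      intro x hx
      have := intermediate_value_Icc (by linarith : -T ≤ T) hβC.continuous.continuousOn
      rw [h1, h2] at this
      obtain ⟨t, -, ht⟩ := this hx
      exact ⟨t, ht⟩
  · intro t ht
    apply Real.smoothTransition.zero_of_nonpos
    have h2T : (0:ℝ) < 2 * T := by linarith
    rw [div_add' _ _ _ h2T.ne']
    apply div_nonpos_of_nonpos_of_nonneg _ h2T.le
    nlinarith
  · intro t ht
    apply Real.smoothTransition.one_of_one_le
    have h2T : (0:ℝ) < 2 * T := by linarith
    rw [div_add' _ _ _ h2T.ne', le_div_iff₀ h2T]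
    nlinarith
  · intro t
    rw [(hβd t).deriv]
    have h2T : (0:ℝ) < 2 * T := by linarith
    rw [abs_mul]
    have : |1 / (2 * T)| = 1 / (2 * T) := abs_of_pos (by positivity)
    rw [this]
    calc |deriv σ _| * (1 / (2 * T)) ≤ B * (1 / (2 * T)) := by
          apply mul_le_mul_of_nonneg_right (hBd _) (by positivity)
      _ = c / 2 := by rw [hT]; field_simp
      _ ≤ c := by linarith

section assemble
variable {H : ℝ → ℝ → R3} {β : ℝ → ℝ}

lemma smoothCC (hH : ContDiff ℝ (⊤ : ℕ∞) (fun p : ℝ × ℝ => H p.1 p.2))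
    (hβC : ContDiff ℝ (⊤ : ℕ∞) β) :
    ContDiff ℝ (⊤ : ℕ∞) (fun p : ℝ × ℝ => CC H β p.1 p.2) := by
  have hq : ContDiff ℝ (⊤ : ℕ∞) (fun p : ℝ × ℝ => ((p.1, β p.2) : ℝ × ℝ)) :=
    contDiff_fst.prodMk (hβC.comp contDiff_snd)
  exact (((hXc hH).comp hq).prodMk (((hYc hH).comp hq).prodMk
    ((((hZc hH).comp hq)).add (((hb1C hβC).comp contDiff_snd).mul ((hhC hH).comp hq))))).prodMk
    contDiff_snd

lemma perCC (hH : ContDiff ℝ (⊤ : ℕ∞) (fun p : ℝ × ℝ => H p.1 p.2))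
    (hleg : ∀ u ∈ Icc (0:ℝ) 1, IsLegendrianKnot fun s => H s u)
    (hβmem : ∀ t, β t ∈ Icc (0:ℝ) 1) :
    ∀ s t, CC H β (s + 2 * π) t = CC H β s t := by
  intro s t
  have hX : Xc H (s + 2 * π, β t) = Xc H (s, β t) := by
    show (H (s + 2 * π) (β t)).1 = (H s (β t)).1
    rw [perH hH hleg (β t) (hβmem t) s]
  have hY : Yc H (s + 2 * π, β t) = Yc H (s, β t) := by
    show (H (s + 2 * π) (β t)).2.1 = (H s (β t)).2.1
    rw [perH hH hleg (β t) (hβmem t) s]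
  have hZ : Zc H (s + 2 * π, β t) = Zc H (s, β t) := by
    show (H (s + 2 * π) (β t)).2.2 = (H s (β t)).2.2
    rw [perH hH hleg (β t) (hβmem t) s]
  have hh : deriv β t * hC H (s + 2 * π, β t) = deriv β t * hC H (s, β t) := by
    rcases eq_or_ne (deriv β t) 0 with hc | hc
    · rw [hc, zero_mul, zero_mul]
    · rw [perhC hH hleg (β t) (betaIoo hβmem hc) s]
  show ((Xc H (s + 2 * π, β t), Yc H (s + 2 * π, β t),
      Zc H (s + 2 * π, β t) + deriv β t * hC H (s + 2 * π, β t)), t)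
    = ((Xc H (s, β t), Yc H (s, β t), Zc H (s, β t) + deriv β t * hC H (s, β t)), t)
  rw [hX, hY, hZ, hh]

lemma CC_triv (hH : ContDiff ℝ (⊤ : ℕ∞) (fun p : ℝ × ℝ => H p.1 p.2))
    {t : ℝ} (hd : deriv β t = 0) (s : ℝ) :
    CC H β s t = (H s (β t), t) := by
  show ((Xc H (s, β t), Yc H (s, β t),
      Zc H (s, β t) + deriv β t * hC H (s, β t)), t) = (H s (β t), t)
  rw [hd, zero_mul, add_zero]
  rfl

lemma distCC (s t : ℝ) :
    dist (CC H β s t) ((H s (β t), t) : R4) = |deriv β t * hC H (s, β t)| := by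
  rw [dist_eq_norm]
  have e : CC H β s t - ((H s (β t), t) : R4)
      = ((0, 0, deriv β t * hC H (s, β t)), 0) := by
    refine Prod.ext (Prod.ext ?_ (Prod.ext ?_ ?_)) ?_
    · exact sub_self _
    · exact sub_self _
    · show Zc H (s, β t) + deriv β t * hC H (s, β t) - Zc H (s, β t) = _
      ring
    · exact sub_self t
  rw [e, Prod.norm_def, Prod.norm_def, Prod.norm_def]
  simp only [norm_zero, Real.norm_eq_abs]
  rw [sup_eq_right.2 (abs_nonneg _), sup_eq_right.2 (abs_nonneg _),
    sup_eq_left.2 (abs_nonneg _)]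

/-- reduction of `hC` bound to the fundamental domain. -/
lemma hC_bound (hH : ContDiff ℝ (⊤ : ℕ∞) (fun p : ℝ × ℝ => H p.1 p.2))
    (hleg : ∀ u ∈ Icc (0:ℝ) 1, IsLegendrianKnot fun s => H s u)
    {Mh : ℝ} (hMh : ∀ s ∈ Icc (-(2*π)) (4*π), ∀ u ∈ Icc (0:ℝ) 1, |hC H (s, u)| ≤ Mh)
    {u : ℝ} (hu : u ∈ Ioo (0:ℝ) 1) (s : ℝ) : |hC H (s, u)| ≤ Mh := by
  have hper : Function.Periodic (fun a => hC H (a, u)) (2 * π) :=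
    fun a => perhC hH hleg u hu a
  have h1 : 0 ≤ s - (⌊s / (2*π)⌋ : ℤ) * (2*π) := Int.sub_floor_div_mul_nonneg s Real.two_pi_pos
  have h2 : s - (⌊s / (2*π)⌋ : ℤ) * (2*π) < 2*π := Int.sub_floor_div_mul_lt s Real.two_pi_pos
  have e : hC H (s - (⌊s / (2*π)⌋ : ℤ) * (2*π), u) = hC H (s, u) :=
    hper.sub_int_mul_eq ⌊s / (2*π)⌋
  rw [← e]
  exact hMh _ ⟨by linarith [Real.pi_pos], by linarith [Real.pi_pos]⟩ u (Ioo_subset_Icc_self hu)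

end assemble

/-- Main existence result. -/
lemma mainEx {K₀ K₁ : ℝ → R3} {H : ℝ → ℝ → R3}
    (hH : ContDiff ℝ (⊤ : ℕ∞) (fun p : ℝ × ℝ => H p.1 p.2))
    (hleg : ∀ u ∈ Icc (0:ℝ) 1, IsLegendrianKnot fun s => H s u)
    (h0 : ∀ s, H s 0 = K₀ s) (h1 : ∀ s, H s 1 = K₁ s) {ε : ℝ} (hε : 0 < ε) :
    ∃ (C : ℝ → ℝ → R4) (β : ℝ → ℝ),
      IsLagConcordance K₀ K₁ C ∧
      ContDiff ℝ (⊤ : ℕ∞) β ∧ Monotone β ∧ Set.range β = Icc (0:ℝ) 1 ∧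
      ∀ s t, dist (C s t) ((H s (β t), t) : R4) < ε := by
  have pi_pos := Real.pi_pos
  obtain ⟨r, hr0, hrπ, hloc⟩ := localInj hH hleg
  obtain ⟨η, hη0, hsep⟩ := sepBound hH hleg hr0 hrπ
  obtain ⟨Mh, hMh0, hMh⟩ := maxhC hH
  set cb : ℝ := min (ε / (2*Mh + 1)) (η / (4*Mh + 1)) with hcb
  have hcb0 : 0 < cb := lt_min (by positivity) (by positivity)
  have hcbε : cb * Mh < ε := by
    have h1 : cb ≤ ε / (2*Mh + 1) := min_le_left _ _
    rw [le_div_iff₀ (by linarith)] at h1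
    nlinarith
  have hcbη : 2 * cb * Mh < η := by
    have h1 : cb ≤ η / (4*Mh + 1) := min_le_right _ _
    rw [le_div_iff₀ (by linarith)] at h1
    nlinarith
  obtain ⟨β, T, hT0, hβC, hβmono, hβmem, hβrange, hβ0, hβ1, hβd⟩ := exists_beta cb hcb0
  -- injectivity
  have hinj : ∀ s₁ t₁ s₂ t₂, CC H β s₁ t₁ = CC H β s₂ t₂ →
      t₁ = t₂ ∧ ∃ n : ℤ, s₂ = s₁ + n * (2 * π) := by
    intro s₁ t₁ s₂ t₂ heq
    have ht : t₁ = t₂ := congrArg Prod.snd heq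
    subst ht
    refine ⟨rfl, ?_⟩
    set u : ℝ := β t₁ with hu
    set c : ℝ := deriv β t₁ with hcdef
    have hper : Function.Periodic (fun s => CC H β s t₁) (2 * π) :=
      fun a => perCC hH hleg hβmem a t₁
    set n₁ : ℤ := ⌊s₁ / (2*π)⌋ with hn₁
    set s₁' : ℝ := s₁ - n₁ * (2*π) with hs₁'
    have hs₁'0 : 0 ≤ s₁' := Int.sub_floor_div_mul_nonneg s₁ Real.two_pi_pos
    have hs₁'lt : s₁' < 2*π := Int.sub_floor_div_mul_lt s₁ Real.two_pi_pos
    set m : ℤ := ⌊(s₂ - s₁' + π) / (2*π)⌋ with hm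
    set s₂' : ℝ := s₂ - m * (2*π) with hs₂'
    have hm1 : 0 ≤ (s₂ - s₁' + π) - m * (2*π) :=
      Int.sub_floor_div_mul_nonneg (s₂ - s₁' + π) Real.two_pi_pos
    have hm2 : (s₂ - s₁' + π) - m * (2*π) < 2*π :=
      Int.sub_floor_div_mul_lt (s₂ - s₁' + π) Real.two_pi_pos
    have hd1 : -π ≤ s₂' - s₁' := by rw [hs₂']; linarith
    have hd2 : s₂' - s₁' < π := by rw [hs₂']; linarith
    have hCeq : CC H β s₁' t₁ = CC H β s₂' t₁ := by
      calc CC H β s₁' t₁ = CC H β s₁ t₁ := hper.sub_int_mul_eq n₁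
        _ = CC H β s₂ t₁ := heq
        _ = CC H β s₂' t₁ := (hper.sub_int_mul_eq m).symm
    have hx : Xc H (s₂', u) = Xc H (s₁', u) := (congrArg (fun q : R4 => q.1.1) hCeq).symm
    have hy : Yc H (s₂', u) = Yc H (s₁', u) := (congrArg (fun q : R4 => q.1.2.1) hCeq).symm
    have hz : Zc H (s₁', u) + c * hC H (s₁', u) = Zc H (s₂', u) + c * hC H (s₂', u) :=
      congrArg (fun q : R4 => q.1.2.2) hCeq
    have hs₁'mem : s₁' ∈ Icc (0:ℝ) (2*π) := ⟨hs₁'0, hs₁'lt.le⟩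
    have key : s₂' = s₁' := by
      rcases le_or_gt |s₂' - s₁'| r with hcase | hcase
      · exact hloc u (hβmem t₁) s₁' hs₁'mem s₂' hcase hx hy
      · exfalso
        have hdle : |s₂' - s₁'| ≤ π := abs_le.2 ⟨by linarith, by linarith⟩
        have hsepa := hsep u (hβmem t₁) s₁' hs₁'mem s₂' hcase.le hdle
        have hnorm : ‖H s₂' u - H s₁' u‖ = |Zc H (s₂', u) - Zc H (s₁', u)| := by
          have ex : (H s₂' u - H s₁' u).1 = 0 := by
            show Xc H (s₂', u) - Xc H (s₁', u) = 0
            rw [hx, sub_self]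
          have ey : (H s₂' u - H s₁' u).2.1 = 0 := by
            show Yc H (s₂', u) - Yc H (s₁', u) = 0
            rw [hy, sub_self]
          rw [Prod.norm_def, Prod.norm_def, ex, ey]
          simp only [norm_zero, Real.norm_eq_abs]
          rw [sup_eq_right.2 (abs_nonneg _), sup_eq_right.2 (abs_nonneg _)]
          rfl
        rcases eq_or_ne c 0 with hc0 | hc0
        · rw [hc0, zero_mul, zero_mul, add_zero, add_zero] at hz
          rw [hnorm, ← hz, sub_self, abs_zero] at hsepa
          linarith
        · have huI : u ∈ Ioo (0:ℝ) 1 := betaIoo hβmem hc0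
          have hzd : Zc H (s₂', u) - Zc H (s₁', u)
              = c * (hC H (s₁', u) - hC H (s₂', u)) := by linear_combination -hz
          have hb1 : |hC H (s₁', u)| ≤ Mh := hC_bound hH hleg hMh huI s₁'
          have hb2 : |hC H (s₂', u)| ≤ Mh := hC_bound hH hleg hMh huI s₂'
          have hcabs : |c| ≤ cb := hβd t₁
          have : |Zc H (s₂', u) - Zc H (s₁', u)| ≤ cb * (2 * Mh) := by
            rw [hzd, abs_mul]
            apply mul_le_mul hcabs _ (abs_nonneg _) hcb0.le
            calc |hC H (s₁', u) - hC H (s₂', u)|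
                ≤ |hC H (s₁', u)| + |hC H (s₂', u)| := abs_sub _ _
              _ ≤ 2 * Mh := by linarith
          rw [hnorm] at hsepa
          nlinarith
    refine ⟨m - n₁, ?_⟩
    have e1 : s₂ - m * (2*π) = s₁ - n₁ * (2*π) := key
    push_cast
    linarith
  refine ⟨CC H β, β, ⟨smoothCC hH hβC, perCC hH hleg hβmem, hinj,
    immCC hH hleg hβC hβmem, lagCC hH hleg hβC hβmem, ⟨T, hT0, ?_, ?_⟩⟩,
    hβC, hβmono, hβrange, ?_⟩
  · intro s t ht
    have hb : β t = 0 := hβ0 t ht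
    have hd : deriv β t = 0 := deriv_zero_of_min' (fun x => (hβmem x).1) hb
    rw [CC_triv hH hd s, hb, h0 s]
  · intro s t ht
    have hb : β t = 1 := hβ1 t ht
    have hd : deriv β t = 0 := deriv_zero_of_max' (fun x => (hβmem x).2) hb
    rw [CC_triv hH hd s, hb, h1 s]
  · intro s t
    rw [distCC]
    rcases eq_or_ne (deriv β t) 0 with hc0 | hc0
    · rw [hc0, zero_mul, abs_zero]; exact hε
    · have huI : β t ∈ Ioo (0:ℝ) 1 := betaIoo hβmem hc0
      have hb : |hC H (s, β t)| ≤ Mh := hC_bound hH hleg hMh huI s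
      calc |deriv β t * hC H (s, β t)| = |deriv β t| * |hC H (s, β t)| := abs_mul _ _
        _ ≤ cb * Mh := mul_le_mul (hβd t) hb (abs_nonneg _) hcb0.le
        _ < ε := hcbε

end Aux

/-- a Legendrian isotopy `H` from `K₀` to `K₁` gives a Lagrangian
concordance `K₀ ≺ K₁`; moreover for every `ε > 0` the concordance may be chosen
`C⁰`-close to the graph of `H`, after reparametrizing `[0,1]` by a smooth weakly
increasing surjection `β : ℝ → [0,1]`. -/

theorem stmt3 (K₀ K₁ : ℝ → R3) (H : ℝ → ℝ → R3)
    (hH : ContDiff ℝ (⊤ : ℕ∞) (fun p : ℝ × ℝ => H p.1 p.2))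
    (hleg : ∀ u ∈ Icc (0:ℝ) 1, IsLegendrianKnot fun s => H s u)
    (h0 : ∀ s, H s 0 = K₀ s) (h1 : ∀ s, H s 1 = K₁ s) :
    Prec K₀ K₁ ∧
    ∀ ε > 0, ∃ (C : ℝ → ℝ → R4) (β : ℝ → ℝ),
      IsLagConcordance K₀ K₁ C ∧
      ContDiff ℝ (⊤ : ℕ∞) β ∧ Monotone β ∧ Set.range β = Icc (0:ℝ) 1 ∧
      ∀ s t, dist (C s t) ((H s (β t), t) : R4) < ε := by
  constructor
  · obtain ⟨C, β, hC, -⟩ := mainEx hH hleg h0 h1 one_pos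
    exact ⟨C, hC⟩
  · intro ε hε
    exact mainEx hH hleg h0 h1 hε
end
end

section
/- If K₀ ≺ K₁, i.e. there is a Lagrangian concordance from the Legendrian knot K₀ to the Legendrian knot K₁ in the symplectisation of (ℝ³, dz − y dx), then their rotation numbers agree: r(K₀) = r(K₁). -/
open Real Set

noncomputable section

/-- The rotation number of a Legendrian knot: the winding number of the derivative
of its Lagrangian projection `s ↦ (x(s), y(s))`. -/
def rot (γ : ℝ → R3) : ℝ :=
  (1 / (2 * π)) * ∫ s in (0:ℝ)..(2 * π),
    (deriv (fun u => (γ u).1) s * deriv (deriv fun u => (γ u).2.1) s -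
      deriv (fun u => (γ u).2.1) s * deriv (deriv fun u => (γ u).1) s) /
    ((deriv (fun u => (γ u).1) s) ^ 2 + (deriv (fun u => (γ u).2.1) s) ^ 2)

lemma aux_dep (P Q R S : ℂ)
    (hlag : (P.re * R.im - P.im * R.re) + (Q.re * S.im - Q.im * S.re) = 0)
    (hdet : P * S - Q * R = 0) :
    (P = 0 ∧ Q = 0) ∨ ∃ l : ℝ, R = (l : ℂ) * P ∧ S = (l : ℂ) * Q := by
  by_cases hP : P = 0
  · by_cases hQ : Q = 0
    · exact Or.inl ⟨hP, hQ⟩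
    · right
      have hR : R = 0 := by
        have h1 : Q * R = 0 := by
          have := sub_eq_zero.mp hdet
          rw [← this, hP, zero_mul]
        rcases mul_eq_zero.mp h1 with h | h
        · exact absurd h hQ
        · exact h
      have hns : Complex.normSq Q ≠ 0 := by simpa [Complex.normSq_eq_zero] using hQ
      have him : (S / Q).im = 0 := by
        rw [Complex.div_im]
        have hl2 : Q.re * S.im - Q.im * S.re = 0 := by
          simp [hP] at hlag; linarith
        field_simp
        linarith
      refine ⟨(S / Q).re, by simp [hR, hP], ?_⟩
      have h2 : ((S / Q).re : ℂ) = S / Q := by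
        have h3 := Complex.re_add_im (S / Q)
        rw [him] at h3; simpa using h3
      rw [h2]
      field_simp
  · right
    have h1 : (starRingEnd ℂ P) * P = (Complex.normSq P : ℂ) := by
      rw [mul_comm]; exact Complex.mul_conj P
    have h2 : (starRingEnd ℂ Q) * Q = (Complex.normSq Q : ℂ) := by
      rw [mul_comm]; exact Complex.mul_conj Q
    set W : ℂ := starRingEnd ℂ P * R + starRingEnd ℂ Q * S with hWdef
    have key1 : W * P = ((Complex.normSq P + Complex.normSq Q : ℝ) : ℂ) * R := by
      push_cast
      linear_combination (starRingEnd ℂ Q) * hdet + R * h1 + R * h2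
    have key2 : W * Q = ((Complex.normSq P + Complex.normSq Q : ℝ) : ℂ) * S := by
      push_cast
      linear_combination (-(starRingEnd ℂ P)) * hdet + S * h1 + S * h2
    have hWim : W.im = 0 := by
      simp only [hWdef, Complex.add_im, Complex.mul_im, Complex.conj_re, Complex.conj_im]
      ring_nf
      ring_nf at hlag
      linarith
    have hWre : ((W.re : ℝ) : ℂ) = W := by
      have h3 := Complex.re_add_im W
      rw [hWim] at h3; simpa using h3
    have hnsq : (Complex.normSq P + Complex.normSq Q) ≠ 0 := by
      have := Complex.normSq_pos.mpr hP
      have := Complex.normSq_nonneg Q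
      positivity
    have hnsqC : ((Complex.normSq P + Complex.normSq Q : ℝ) : ℂ) ≠ 0 := by
      exact_mod_cast hnsq
    refine ⟨W.re / (Complex.normSq P + Complex.normSq Q), ?_, ?_⟩
    · push_cast at key1 ⊢
      rw [div_mul_eq_mul_div, hWre, eq_comm, div_eq_iff (by push_cast at hnsqC; exact hnsqC)]
      linear_combination key1
    · push_cast at key2 ⊢
      rw [div_mul_eq_mul_div, hWre, eq_comm, div_eq_iff (by push_cast at hnsqC; exact hnsqC)]
      linear_combination key2

lemma aux_det_ne (y : ℝ) (u v : R4)
    (hind : LinearIndependent ℝ ![u, v])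
    (hlag : (u.2 * v.1.2.2 - u.1.2.2 * v.2) - y * (u.2 * v.1.1 - u.1.1 * v.2)
      + (u.1.1 * v.1.2.1 - u.1.2.1 * v.1.1) = 0) :
    ((u.1.1 : ℂ) + (u.1.2.1 : ℝ) * Complex.I) *
        ((v.2 : ℂ) + ((v.1.2.2 - y * v.1.1 : ℝ)) * Complex.I)
      - ((u.2 : ℂ) + ((u.1.2.2 - y * u.1.1 : ℝ)) * Complex.I) *
        ((v.1.1 : ℂ) + (v.1.2.1 : ℝ) * Complex.I) ≠ 0 := by
  obtain ⟨⟨ux, uy, uz⟩, ut⟩ := u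
  obtain ⟨⟨vx, vy, vz⟩, vt⟩ := v
  simp only at hlag ⊢
  intro hdet
  set P : ℂ := (ux : ℂ) + (uy : ℝ) * Complex.I with hPdef
  set Q : ℂ := (ut : ℂ) + ((uz - y * ux : ℝ)) * Complex.I with hQdef
  set R : ℂ := (vx : ℂ) + (vy : ℝ) * Complex.I with hRdef
  set S : ℂ := (vt : ℂ) + ((vz - y * vx : ℝ)) * Complex.I with hSdef
  have hre : P.re = ux ∧ P.im = uy ∧ Q.re = ut ∧ Q.im = uz - y * ux ∧
      R.re = vx ∧ R.im = vy ∧ S.re = vt ∧ S.im = vz - y * vx := by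
    refine ⟨?_, ?_, ?_, ?_, ?_, ?_, ?_, ?_⟩ <;> simp [hPdef, hQdef, hRdef, hSdef]
  obtain ⟨e1, e2, e3, e4, e5, e6, e7, e8⟩ := hre
  have hlag' : (P.re * R.im - P.im * R.re) + (Q.re * S.im - Q.im * S.re) = 0 := by
    rw [e1, e2, e3, e4, e5, e6, e7, e8]; ring_nf; ring_nf at hlag; linarith
  have hdet' : P * S - Q * R = 0 := hdet
  rcases aux_dep P Q R S hlag' hdet' with ⟨hP0, hQ0⟩ | ⟨l, hR, hS⟩
  · have hux : ux = 0 := by have := congrArg Complex.re hP0; simpa [e1] using this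
    have huy : uy = 0 := by have := congrArg Complex.im hP0; simpa [e2] using this
    have hut : ut = 0 := by have := congrArg Complex.re hQ0; simpa [e3] using this
    have huz : uz = 0 := by
      have := congrArg Complex.im hQ0
      have h4 : uz - y * ux = 0 := by simpa [e4] using this
      rw [hux] at h4; linarith
    have hne := hind.ne_zero 0
    simp only [Matrix.cons_val_zero] at hne
    exact hne (by simp [Prod.ext_iff, hux, huy, hut, huz])
  · -- v = l • u, contradicting independence
    have c1 : vx = l * ux := by
      have := congrArg Complex.re hR
      simpa [e5, e1, Complex.mul_re] using this
    have c2 : vy = l * uy := by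
      have := congrArg Complex.im hR
      simpa [e6, e2, Complex.mul_im] using this
    have c3 : vt = l * ut := by
      have := congrArg Complex.re hS
      simpa [e7, e3, Complex.mul_re] using this
    have c4 : vz = l * uz := by
      have := congrArg Complex.im hS
      have h4 : vz - y * vx = l * (uz - y * ux) := by
        simpa [e8, e4, Complex.mul_im] using this
      rw [c1] at h4; ring_nf at h4 ⊢; linarith
    have hdep := (LinearIndependent.pair_iff.mp hind l (-1) ?_).2
    · norm_num at hdep
    · show l • ((ux, uy, uz), ut) + (-1 : ℝ) • ((vx, vy, vz), vt) = 0
      simp [Prod.ext_iff, Prod.smul_def, smul_eq_mul, c1, c2, c3, c4]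

lemma aux_winding (D : ℝ → ℂ) (hD : Differentiable ℝ D)
    (hD' : Continuous (deriv D)) (hne : ∀ s, D s ≠ 0)
    (hper : D (2 * π) = D 0) :
    ∃ n : ℤ, (∫ s in (0:ℝ)..(2 * π), deriv D s / D s) = (n : ℂ) * (2 * π * Complex.I) := by
  set f : ℝ → ℂ := fun s => deriv D s / D s with hf
  have hfc : Continuous f := hD'.div hD.continuous hne
  set g : ℝ → ℂ := fun x => ∫ s in (0:ℝ)..x, f s with hg
  have hgd : ∀ x, HasDerivAt g (f x) x := fun x =>
    (hfc.integral_hasStrictDerivAt 0 x).hasDerivAt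
  have key : ∀ x, HasDerivAt (fun x => D x * Complex.exp (-g x)) 0 x := by
    intro x
    have h1 : HasDerivAt D (deriv D x) x := (hD x).hasDerivAt
    have h2 : HasDerivAt (fun x => Complex.exp (-g x))
        (Complex.exp (-g x) * (-f x)) x := ((hgd x).neg).cexp
    have h3 := h1.mul h2
    refine h3.congr_deriv ?_
    have hDx := hne x
    have hc : D x * (deriv D x / D x) = deriv D x := mul_div_cancel₀ _ hDx
    show deriv D x * _ + D x * (_ * -(deriv D x / D x)) = 0
    linear_combination (-Complex.exp (-g x)) * hc
  have hdiff : Differentiable ℝ (fun x => D x * Complex.exp (-g x)) :=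
    fun x => (key x).differentiableAt
  have hderiv0 : ∀ x, deriv (fun x => D x * Complex.exp (-g x)) x = 0 :=
    fun x => (key x).deriv
  have hconst := is_const_of_deriv_eq_zero hdiff hderiv0 (2 * π) 0
  have hg0 : g 0 = 0 := by simp [hg]
  rw [hper, hg0] at hconst
  simp only [neg_zero, Complex.exp_zero, mul_one] at hconst
  have hexp : Complex.exp (-g (2 * π)) = 1 := by
    have h0 := hne 0
    field_simp at hconst
    exact hconst
  have : Complex.exp (g (2 * π)) = 1 := by
    have := congrArg (· * Complex.exp (g (2 * π))) hexp
    simpa [← Complex.exp_add] using this.symm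
  obtain ⟨n, hn⟩ := Complex.exp_eq_one_iff.mp this
  exact ⟨n, hn⟩

lemma aux_const (g : ℝ → ℝ) (hg : Continuous g) (c : ℝ) (hc : 0 < c)
    (hint : ∀ t, ∃ n : ℤ, g t = n * c) (a b : ℝ) : g a = g b := by
  by_contra hne
  obtain ⟨n, hn⟩ := hint a
  obtain ⟨m, hm⟩ := hint b
  have hnm : n ≠ m := by
    intro h; apply hne; rw [hn, hm, h]
  obtain ⟨j, hj⟩ : ∃ j : ℤ, ((j : ℝ) * c + c / 2) ∈ uIcc (g a) (g b) := by
    rcases le_total n m with h | h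
    · have h2 : (n : ℝ) + 1 ≤ (m : ℝ) := by
        have : n + 1 ≤ m := by omega
        exact_mod_cast this
      refine ⟨n, ?_⟩
      rw [uIcc_of_le (by rw [hn, hm]; nlinarith)]
      exact ⟨by rw [hn]; nlinarith, by rw [hm]; nlinarith⟩
    · have h2 : (m : ℝ) + 1 ≤ (n : ℝ) := by
        have : m + 1 ≤ n := by omega
        exact_mod_cast this
      refine ⟨m, ?_⟩
      rw [uIcc_of_ge (by rw [hn, hm]; nlinarith)]
      exact ⟨by rw [hm]; nlinarith, by rw [hn]; nlinarith⟩
  have hsub : uIcc (g a) (g b) ⊆ g '' uIcc a b :=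
    intermediate_value_uIcc hg.continuousOn
  obtain ⟨x, _, hgx⟩ := hsub hj
  obtain ⟨k, hk⟩ := hint x
  rw [hk] at hgx
  have hkey : ((k - j : ℤ) : ℝ) * c = c / 2 := by push_cast; linarith
  rcases lt_trichotomy (k - j) 0 with h | h | h
  · have h' : k - j ≤ -1 := by omega
    have h'' : ((k - j : ℤ) : ℝ) ≤ -1 := by exact_mod_cast h'
    nlinarith
  · rw [h] at hkey; push_cast at hkey; linarith
  · have h'' : (1 : ℝ) ≤ ((k - j : ℤ) : ℝ) := by exact_mod_cast h
    nlinarith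

lemma aux_comp (γ : ℝ → R3) (hγ : Differentiable ℝ γ) (s : ℝ) :
    deriv γ s = (deriv (fun u => (γ u).1) s, deriv (fun u => (γ u).2.1) s,
      deriv (fun u => (γ u).2.2) s) := by
  have h := (hγ s).hasDerivAt
  have h1 : HasDerivAt (fun u => (γ u).1) (deriv γ s).1 s :=
    (ContinuousLinearMap.fst ℝ ℝ (ℝ × ℝ)).hasFDerivAt.comp_hasDerivAt s h
  have h2 : HasDerivAt (fun u => (γ u).2) (deriv γ s).2 s :=
    (ContinuousLinearMap.snd ℝ ℝ (ℝ × ℝ)).hasFDerivAt.comp_hasDerivAt s h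
  have h21 : HasDerivAt (fun u => (γ u).2.1) (deriv γ s).2.1 s :=
    (ContinuousLinearMap.fst ℝ ℝ ℝ).hasFDerivAt.comp_hasDerivAt s h2
  have h22 : HasDerivAt (fun u => (γ u).2.2) (deriv γ s).2.2 s :=
    (ContinuousLinearMap.snd ℝ ℝ ℝ).hasFDerivAt.comp_hasDerivAt s h2
  rw [h1.deriv, h21.deriv, h22.deriv]

/-- the rotation number is invariant under Lagrangian concordance. -/
theorem stmt4 (K₀ K₁ : ℝ → R3) (h₀ : IsLegendrianKnot K₀) (h₁ : IsLegendrianKnot K₁)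
    (h : Prec K₀ K₁) : rot K₀ = rot K₁ := by
  obtain ⟨C, hC⟩ := h
  obtain ⟨T, hT, hend0, hend1⟩ := hC.ends
  have hCs : ContDiff ℝ (⊤ : ℕ∞) (fun p : ℝ × ℝ => C p.1 p.2) := hC.smooth
  set Ch : ℝ × ℝ → R4 := fun p : ℝ × ℝ => C p.1 p.2 with hChdef
  have hCd : Differentiable ℝ Ch := hCs.differentiable (by simp)
  set P1 : ℝ × ℝ → R4 := fun p => fderiv ℝ Ch p (1, 0) with hP1def
  set P2 : ℝ × ℝ → R4 := fun p => fderiv ℝ Ch p (0, 1) with hP2def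
  have hpd1 : ∀ s t, HasDerivAt (fun u => C u t) (P1 (s, t)) s := by
    intro s t
    have h1 : HasDerivAt (fun u : ℝ => (u, t)) ((1 : ℝ), (0 : ℝ)) s :=
      (hasDerivAt_id s).prodMk (hasDerivAt_const s t)
    exact (hCd (s, t)).hasFDerivAt.comp_hasDerivAt s h1
  have hpd2 : ∀ s t, HasDerivAt (fun u => C s u) (P2 (s, t)) t := by
    intro s t
    have h1 : HasDerivAt (fun u : ℝ => (s, u)) ((0 : ℝ), (1 : ℝ)) t :=
      (hasDerivAt_const t s).prodMk (hasDerivAt_id t)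
    exact (hCd (s, t)).hasFDerivAt.comp_hasDerivAt t h1
  have hP1eq : ∀ s t, pd1 C s t = P1 (s, t) := fun s t => (hpd1 s t).deriv
  have hP2eq : ∀ s t, pd2 C s t = P2 (s, t) := fun s t => (hpd2 s t).deriv
  have hfd : ContDiff ℝ (⊤ : ℕ∞) (fderiv ℝ Ch) := hCs.fderiv_right (mod_cast le_top)
  have hP1s : ContDiff ℝ (⊤ : ℕ∞) P1 := hfd.clm_apply contDiff_const
  have hP2s : ContDiff ℝ (⊤ : ℕ∞) P2 := hfd.clm_apply contDiff_const
  set Dh : ℝ × ℝ → ℂ := fun p =>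
    (((P1 p).1.1 : ℂ) + ((P1 p).1.2.1 : ℝ) * Complex.I) *
      (((P2 p).2 : ℂ) + (((P2 p).1.2.2 - (Ch p).1.2.1 * (P2 p).1.1 : ℝ)) * Complex.I) -
    (((P1 p).2 : ℂ) + (((P1 p).1.2.2 - (Ch p).1.2.1 * (P1 p).1.1 : ℝ)) * Complex.I) *
      (((P2 p).1.1 : ℂ) + ((P2 p).1.2.1 : ℝ) * Complex.I) with hDhdef
  have hre : ∀ (f : ℝ × ℝ → ℝ), ContDiff ℝ (⊤ : ℕ∞) f →
      ContDiff ℝ (⊤ : ℕ∞) (fun p => ((f p : ℝ) : ℂ)) := fun f hf =>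
    Complex.ofRealCLM.contDiff.comp hf
  have hDhs : ContDiff ℝ (⊤ : ℕ∞) Dh := by
    apply ContDiff.sub
    · exact ((hre _ hP1s.fst.fst).add ((hre _ hP1s.fst.snd.fst).mul contDiff_const)).mul
        ((hre _ hP2s.snd).add ((hre _ (hP2s.fst.snd.snd.sub
          ((hCs.fst.snd.fst).mul hP2s.fst.fst))).mul contDiff_const))
    · exact ((hre _ hP1s.snd).add ((hre _ (hP1s.fst.snd.snd.sub
        ((hCs.fst.snd.fst).mul hP1s.fst.fst))).mul contDiff_const)).mul
        ((hre _ hP2s.fst.fst).add ((hre _ hP2s.fst.snd.fst).mul contDiff_const))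
  have hDne : ∀ p : ℝ × ℝ, Dh p ≠ 0 := by
    rintro ⟨s, t⟩
    have hlag := hC.lagrangian s t
    rw [omegaSym] at hlag
    have hlag' : ((pd1 C s t).2 * (pd2 C s t).1.2.2 - (pd1 C s t).1.2.2 * (pd2 C s t).2)
        - (C s t).1.2.1 * ((pd1 C s t).2 * (pd2 C s t).1.1 - (pd1 C s t).1.1 * (pd2 C s t).2)
        + ((pd1 C s t).1.1 * (pd2 C s t).1.2.1 - (pd1 C s t).1.2.1 * (pd2 C s t).1.1) = 0 := by
      rcases mul_eq_zero.mp hlag with h' | h'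
      · exact absurd h' (Real.exp_ne_zero _)
      · exact h'
    rw [hP1eq s t, hP2eq s t] at hlag'
    have hind := hC.immersed s t
    rw [hP1eq s t, hP2eq s t] at hind
    exact aux_det_ne ((Ch (s, t)).1.2.1) (P1 (s, t)) (P2 (s, t)) hind hlag'
  set Ds : ℝ × ℝ → ℂ := fun p => fderiv ℝ Dh p (1, 0) with hDsdef
  have hDss : ContDiff ℝ (⊤ : ℕ∞) Ds := (hDhs.fderiv_right (mod_cast le_top)).clm_apply contDiff_const
  have hDd : Differentiable ℝ Dh := hDhs.differentiable (by simp)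
  have hDsderiv : ∀ s t, HasDerivAt (fun u => Dh (u, t)) (Ds (s, t)) s := by
    intro s t
    have h1 : HasDerivAt (fun u : ℝ => (u, t)) ((1 : ℝ), (0 : ℝ)) s :=
      (hasDerivAt_id s).prodMk (hasDerivAt_const s t)
    exact (hDd (s, t)).hasFDerivAt.comp_hasDerivAt s h1
  set φ : ℝ × ℝ → ℝ := fun p => (Ds p / Dh p).im with hφdef
  have hφc : Continuous φ :=
    Complex.continuous_im.comp
      ((hDss.continuous).div (hDhs.continuous) hDne)
  set Iv : ℝ → ℝ := fun t => ∫ s in (0 : ℝ)..(2 * π), φ (s, t) with hIvdef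
  have hIvc : Continuous Iv := by
    have := intervalIntegral.continuous_parametric_intervalIntegral_of_continuous'
      (μ := MeasureTheory.volume) (f := fun t s => φ (s, t))
      (hφc.comp continuous_swap) 0 (2 * π)
    exact this
  have hInt : ∀ t, ∃ n : ℤ, Iv t = n * (2 * π) := by
    intro t
    have hDt : Differentiable ℝ (fun s => Dh (s, t)) := fun s => (hDsderiv s t).differentiableAt
    have hdt : deriv (fun s => Dh (s, t)) = fun s => Ds (s, t) :=
      funext fun s => (hDsderiv s t).deriv
    have hper : Dh (2 * π, t) = Dh (0, t) := by
      have hchp : Ch (2 * π, t) = Ch (0, t) := by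
        show C (2 * π) t = C 0 t
        have h2 := hC.periodic 0 t; rw [zero_add] at h2; exact h2
      have hq1 : P1 (2 * π, t) = P1 (0, t) := by
        rw [← hP1eq, ← hP1eq]
        show deriv (fun u => C u t) (2 * π) = deriv (fun u => C u t) 0
        have h2 := deriv_comp_add_const (fun u => C u t) (2 * π) 0
        have heq : (fun x => C (x + 2 * π) t) = fun u => C u t :=
          funext fun x => hC.periodic x t
        rw [heq, zero_add] at h2
        exact h2.symm
      have hq2 : P2 (2 * π, t) = P2 (0, t) := by
        rw [← hP2eq, ← hP2eq]
        show deriv (fun u => C (2 * π) u) t = deriv (fun u => C 0 u) t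
        have heq : (fun u => C (2 * π) u) = fun u => C 0 u := by
          funext u
          have h2 := hC.periodic 0 u; rw [zero_add] at h2; exact h2
        rw [heq]
      show Dh (2 * π, t) = Dh (0, t)
      rw [hDhdef]
      simp only [hq1, hq2, hchp]
    obtain ⟨n, hn⟩ := aux_winding (fun s => Dh (s, t)) hDt
      (by rw [hdt]; exact hDss.continuous.comp (continuous_id.prodMk continuous_const))
      (fun s => hDne (s, t)) hper
    refine ⟨n, ?_⟩
    have hintg : IntervalIntegrable (fun s => Ds (s, t) / Dh (s, t))
        MeasureTheory.volume 0 (2 * π) := by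
      apply Continuous.intervalIntegrable
      exact ((hDss.continuous.comp (continuous_id.prodMk continuous_const)).div
        (hDhs.continuous.comp (continuous_id.prodMk continuous_const))
        (fun s => hDne (s, t)))
    have him := Complex.imCLM.intervalIntegral_comp_comm hintg
    have heq2 : Iv t = (∫ s in (0:ℝ)..(2 * π), Ds (s, t) / Dh (s, t)).im := by
      rw [hIvdef]
      simp only [hφdef]
      exact him
    rw [heq2]
    rw [hdt] at hn
    rw [hn]
    simp [Complex.mul_im]
  have hkey : ∀ (γ : ℝ → R3), ContDiff ℝ (⊤ : ℕ∞) γ → ∀ tstar : ℝ,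
      (∀ s u, |u - tstar| < 1 → C s u = (γ s, u)) →
      Iv tstar = ∫ s in (0:ℝ)..(2 * π),
        (deriv (fun u => (γ u).1) s * deriv (deriv fun u => (γ u).2.1) s -
          deriv (fun u => (γ u).2.1) s * deriv (deriv fun u => (γ u).1) s) /
        ((deriv (fun u => (γ u).1) s) ^ 2 + (deriv (fun u => (γ u).2.1) s) ^ 2) := by
    intro γ hγs tstar hloc
    have hγd : Differentiable ℝ γ := hγs.differentiable (by simp)
    set x' : ℝ → ℝ := deriv (fun u => (γ u).1) with hx'def
    set y' : ℝ → ℝ := deriv (fun u => (γ u).2.1) with hy'def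
    have hend : ∀ s, Dh (s, tstar) = (x' s : ℂ) + (y' s : ℝ) * Complex.I := by
      intro s
      have hp1 : P1 (s, tstar) = (deriv γ s, 0) := by
        rw [← hP1eq]
        show deriv (fun u => C u tstar) s = _
        have heq : (fun u => C u tstar) = fun u => ((γ u : R3), tstar) :=
          funext fun u => hloc u tstar (by simp)
        rw [heq]
        exact ((hγd s).hasDerivAt.prodMk (hasDerivAt_const s tstar)).deriv
      have hp2 : P2 (s, tstar) = (0, 1) := by
        rw [← hP2eq]
        show deriv (fun u => C s u) tstar = _
        have heq : (fun u => C s u) =ᶠ[nhds tstar] fun u => ((γ s : R3), u) := by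
          filter_upwards [Metric.ball_mem_nhds tstar one_pos] with u hu
          exact hloc s u (by simpa [Real.dist_eq] using hu)
        rw [heq.deriv_eq]
        exact ((hasDerivAt_const tstar (γ s)).prodMk (hasDerivAt_id tstar)).deriv
      have hch : Ch (s, tstar) = (γ s, tstar) := hloc s tstar (by simp)
      have hcomp := aux_comp γ hγd s
      show Dh (s, tstar) = _
      simp only [hDhdef]
      rw [hp1, hp2, hch, hcomp]
      simp
      rfl
    have hcx : ContDiff ℝ (⊤ : ℕ∞) (fun u => (γ u).1) := hγs.fst
    have hcy : ContDiff ℝ (⊤ : ℕ∞) (fun u => (γ u).2.1) := hγs.snd.fst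
    have hdx : Differentiable ℝ x' :=
      ((contDiff_infty_iff_deriv.mp hcx).2).differentiable (by simp)
    have hdy : Differentiable ℝ y' :=
      ((contDiff_infty_iff_deriv.mp hcy).2).differentiable (by simp)
    have hends : ∀ s, Ds (s, tstar) = ((deriv x' s : ℝ) : ℂ) + (deriv y' s : ℝ) * Complex.I := by
      intro s
      have hh1 := hDsderiv s tstar
      have heq : (fun u => Dh (u, tstar)) = fun u => (x' u : ℂ) + (y' u : ℝ) * Complex.I :=
        funext hend
      have hh2 : HasDerivAt (fun u => (x' u : ℂ) + (y' u : ℝ) * Complex.I)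
          (((deriv x' s : ℝ) : ℂ) + (deriv y' s : ℝ) * Complex.I) s := by
        have hx : HasDerivAt x' (deriv x' s) s := (hdx s).hasDerivAt
        have hy : HasDerivAt y' (deriv y' s) s := (hdy s).hasDerivAt
        exact (hx.ofReal_comp).add (hy.ofReal_comp.mul_const Complex.I)
      rw [heq] at hh1
      exact hh1.unique hh2
    have hφend : ∀ s, φ (s, tstar) =
        (x' s * deriv y' s - y' s * deriv x' s) / ((x' s) ^ 2 + (y' s) ^ 2) := by
      intro s
      have hne2 : (x' s) ^ 2 + (y' s) ^ 2 ≠ 0 := by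
        have := hDne (s, tstar)
        rw [hend s] at this
        have h3 : Complex.normSq ((x' s : ℂ) + (y' s : ℝ) * Complex.I) ≠ 0 := by
          simpa [Complex.normSq_eq_zero] using this
        rwa [Complex.normSq_add_mul_I] at h3
      show (Ds (s, tstar) / Dh (s, tstar)).im = _
      rw [hends s, hend s, Complex.div_im, Complex.normSq_add_mul_I]
      simp only [Complex.add_re, Complex.add_im, Complex.ofReal_re, Complex.ofReal_im,
        Complex.mul_re, Complex.mul_im, Complex.I_re, Complex.I_im]
      field_simp
      ring
    simp only [hIvdef]
    exact intervalIntegral.integral_congr fun s _ => hφend s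
  have h2πpos : (0 : ℝ) < 2 * π := by positivity
  have hloc0 : ∀ s u, |u - (-(T + 1))| < 1 → C s u = (K₀ s, u) := by
    intro s u hu
    apply hend0
    have h3 := abs_lt.mp hu
    linarith [h3.1, h3.2]
  have hloc1 : ∀ s u, |u - (T + 1)| < 1 → C s u = (K₁ s, u) := by
    intro s u hu
    apply hend1
    have h3 := abs_lt.mp hu
    linarith [h3.1, h3.2]
  have e0 := hkey K₀ h₀.smooth (-(T + 1)) hloc0
  have e1 := hkey K₁ h₁.smooth (T + 1) hloc1
  have hc := aux_const Iv hIvc (2 * π) h2πpos hInt (-(T + 1)) (T + 1)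
  rw [rot, rot, ← e0, ← e1, hc]
end
end
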